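/- L²-local-norm commutator bound (Lemma 3.5). There is a universal constant C such that for every n, every k-local Hamiltonian H = Σ_a λ_a E_a and every k'-local Hamiltonian G = Σ_b κ_b F_b on n qubits, one has ‖[H,G]‖_F ≤ C·(4(k'+k))^{3k}·‖H‖₍₂₎·‖G‖_F and ‖[H,G]‖₍₂₎ ≤ C·(4(k'+k))^{3k}·‖H‖₍₂₎·‖G‖₍₂₎. -/

import Mathlib

open Complex Matrix
open scoped BigOperators Classical

noncomputable section

/-- The space of `n`-qubit operators, as matrices indexed by bit-strings. -/
abbrev QMat (n : ℕ) := Matrix (Fin n → Fin 2) (Fin n → Fin 2) ℂ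

/-- The single-qubit Pauli matrices, indexed so that `0 = σ_I`, `1 = σ_x`, `2 = σ_y`,
`3 = σ_z`. -/
def pauli1 (a : Fin 4) : Matrix (Fin 2) (Fin 2) ℂ :=
  if a = 0 then 1
  else if a = 1 then !![0, 1; 1, 0]
  else if a = 2 then !![0, -Complex.I; Complex.I, 0]
  else !![1, 0; 0, -1]

/-- The `n`-qubit Pauli (Kronecker product of single-qubit Paulis) described by
`p : Fin n → Fin 4`. -/
def PauliOp {n : ℕ} (p : Fin n → Fin 4) : QMat n :=
  Matrix.of fun x y => ∏ i, pauli1 (p i) (x i) (y i)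

/-- The support of a Pauli: the set of qubits where it acts non-trivially. -/
def psupp {n : ℕ} (p : Fin n → Fin 4) : Finset (Fin n) :=
  Finset.univ.filter fun i => p i ≠ 0

/-- Commutator `[A, B] = A*B - B*A`. -/
def cm {α : Type*} [Ring α] (A B : α) : α := A * B - B * A

/-- Frobenius norm of a complex square matrix. -/
def frobNorm {m : Type*} [Fintype m] (M : Matrix m m ℂ) : ℝ :=
  Real.sqrt (∑ x, ∑ y, ‖M x y‖ ^ 2)

/-- Matrix exponential. -/
def mexp {m : Type*} [Fintype m] [DecidableEq m] (M : Matrix m m ℂ) : Matrix m m ℂ :=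
  NormedSpace.exp M

/-- The coefficient of the Pauli `p` in the Pauli expansion `M = Σ_Q c_Q Q`. -/
def pauliCoeff {n : ℕ} (M : QMat n) (p : Fin n → Fin 4) : ℂ :=
  Matrix.trace (M * PauliOp p) / (2 ^ n : ℂ)

/-- The local norm `‖M‖₍₁₎ = max_i Σ_{Q : i ∈ supp(Q)} |c_Q|`. -/
def lonorm {n : ℕ} (M : QMat n) : ℝ :=
  ⨆ i : Fin n, ∑ p : Fin n → Fin 4,
    if i ∈ psupp p then ‖pauliCoeff M p‖ else 0

/-- The local norm `‖M‖₍₂₎ = max_i (Σ_{Q : i ∈ supp(Q)} |c_Q|²)^{1/2}`. -/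
def ltnorm {n : ℕ} (M : QMat n) : ℝ :=
  ⨆ i : Fin n, Real.sqrt (∑ p : Fin n → Fin 4,
    if i ∈ psupp p then ‖pauliCoeff M p‖ ^ 2 else 0)

/-- `H` is the Hamiltonian `Σ_a λ_a E_a` with distinct non-identity Pauli terms. -/
def IsHamiltonian {n m : ℕ} (lam : Fin m → ℝ) (E : Fin m → Fin n → Fin 4) (H : QMat n) : Prop :=
  Function.Injective E ∧ (∀ a, E a ≠ fun _ => 0) ∧ H = ∑ a, (lam a : ℂ) • PauliOp (E a)

/-- Every term of the Hamiltonian has support of size at most `k`. -/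
def KLocal {n m : ℕ} (E : Fin m → Fin n → Fin 4) (k : ℕ) : Prop :=
  ∀ a, (psupp (E a)).card ≤ k


section AuxPauli

/-- Klein four-group multiplication on Pauli labels. -/
def pmul (a b : Fin 4) : Fin 4 :=
  if a = 0 then b else if b = 0 then a else if a = b then 0
  else ⟨(6 - a.val - b.val) % 4, Nat.mod_lt _ (by norm_num)⟩

/-- Exponent of `I` in the phase of `pauli1 a * pauli1 b`. -/
def pph (a b : Fin 4) : ℕ :=
  if a = 0 ∨ b = 0 ∨ a = b then 0
  else if (a = 1 ∧ b = 2) ∨ (a = 2 ∧ b = 3) ∨ (a = 3 ∧ b = 1) then 1 else 3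

lemma pmul_self (a : Fin 4) : pmul a a = 0 := by fin_cases a <;> decide
lemma pmul_comm (a b : Fin 4) : pmul a b = pmul b a := by fin_cases a <;> fin_cases b <;> decide
lemma pmul_eq_zero_iff {a b : Fin 4} : pmul a b = 0 ↔ a = b := by
  fin_cases a <;> fin_cases b <;> decide
lemma pmul_cancel (a b : Fin 4) : pmul a (pmul a b) = b := by
  fin_cases a <;> fin_cases b <;> decide
lemma pph_self (a : Fin 4) : pph a a = 0 := by fin_cases a <;> decide
lemma pph_comm_of (a b : Fin 4) (h : a = 0 ∨ b = 0 ∨ a = b) : pph a b = pph b a := by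
  fin_cases a <;> fin_cases b <;> first | decide | (exfalso; revert h; decide)

set_option maxHeartbeats 1000000 in
lemma pauli1_mul (a b : Fin 4) :
    pauli1 a * pauli1 b = (Complex.I ^ pph a b) • pauli1 (pmul a b) := by
  have h4 : ∀ (A B : Matrix (Fin 2) (Fin 2) ℂ) (c : ℂ) (C : Matrix (Fin 2) (Fin 2) ℂ),
      (∀ i j, ∑ z, A i z * B z j = c * C i j) → A * B = c • C := by
    intro A B c C h; ext i j; simpa [Matrix.mul_apply] using h i j
  fin_cases a <;> fin_cases b <;>
    · apply h4
      intro i j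
      norm_num [pauli1, pmul, pph]
      fin_cases i <;> fin_cases j <;>
        simp [Fin.sum_univ_two, Matrix.one_apply, pow_succ, Complex.I_sq] <;> ring

variable {n : ℕ}

/-- pointwise product label -/
def pprod (p q : Fin n → Fin 4) : Fin n → Fin 4 := fun i => pmul (p i) (q i)

/-- total phase -/
def pphase (p q : Fin n → Fin 4) : ℂ := ∏ i, Complex.I ^ pph (p i) (q i)

lemma abs_pphase (p q : Fin n → Fin 4) : ‖pphase p q‖ = 1 := by
  rw [pphase, norm_prod]
  simp [Complex.norm_I]

lemma PauliOp_mul (p q : Fin n → Fin 4) :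
    PauliOp p * PauliOp q = pphase p q • PauliOp (pprod p q) := by
  ext x y
  rw [Matrix.mul_apply]
  have h1 : ∀ z : Fin n → Fin 2,
      (∏ i, pauli1 (p i) (x i) (z i)) * ∏ i, pauli1 (q i) (z i) (y i)
        = ∏ i, (pauli1 (p i) (x i) (z i) * pauli1 (q i) (z i) (y i)) := by
    intro z; rw [Finset.prod_mul_distrib]
  calc ∑ z : Fin n → Fin 2, PauliOp p x z * PauliOp q z y
      = ∑ z : Fin n → Fin 2, ∏ i, (pauli1 (p i) (x i) (z i) * pauli1 (q i) (z i) (y i)) := by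
        apply Finset.sum_congr rfl; intro z _; exact h1 z
    _ = ∏ i, ∑ c : Fin 2, pauli1 (p i) (x i) c * pauli1 (q i) c (y i) := by
        rw [Finset.prod_univ_sum]
        rw [Fintype.piFinset_univ]
    _ = ∏ i, (pauli1 (p i) * pauli1 (q i)) (x i) (y i) := by
        apply Finset.prod_congr rfl; intro i _; rw [Matrix.mul_apply]
    _ = ∏ i, (Complex.I ^ pph (p i) (q i) * pauli1 (pmul (p i) (q i)) (x i) (y i)) := by
        apply Finset.prod_congr rfl; intro i _; rw [pauli1_mul]; rfl
    _ = pphase p q • PauliOp (pprod p q) x y := by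
        rw [Finset.prod_mul_distrib]; rfl

lemma trace_pauli1 (a : Fin 4) : pauli1 a 0 0 + pauli1 a 1 1 = if a = 0 then 2 else 0 := by
  fin_cases a <;> simp (config := { decide := true }) [pauli1] <;> norm_num

lemma trace_PauliOp (p : Fin n → Fin 4) :
    Matrix.trace (PauliOp p) = if p = (fun _ => 0) then (2 ^ n : ℂ) else 0 := by
  have : Matrix.trace (PauliOp p) = ∏ i, (pauli1 (p i) 0 0 + pauli1 (p i) 1 1) := by
    rw [Matrix.trace]
    calc ∑ x : Fin n → Fin 2, Matrix.diag (PauliOp p) x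
        = ∑ x : Fin n → Fin 2, ∏ i, pauli1 (p i) (x i) (x i) := rfl
      _ = ∏ i, ∑ c : Fin 2, pauli1 (p i) c c := by
          rw [Finset.prod_univ_sum, Fintype.piFinset_univ]
      _ = ∏ i, (pauli1 (p i) 0 0 + pauli1 (p i) 1 1) := by
          apply Finset.prod_congr rfl; intro i _; rw [Fin.sum_univ_two]
  rw [this]
  by_cases h : p = (fun _ => 0)
  · subst h; simp [trace_pauli1]
  · simp only [h, if_false]
    have : ∃ i, p i ≠ 0 := by
      by_contra hc; push_neg at hc; exact h (funext fun i => hc i)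
    obtain ⟨i, hi⟩ := this
    apply Finset.prod_eq_zero (Finset.mem_univ i)
    rw [trace_pauli1]; simp [hi]

lemma pphase_self (p : Fin n → Fin 4) : pphase p p = 1 := by
  rw [pphase]; apply Finset.prod_eq_one; intro i _; rw [pph_self]; rfl

lemma pprod_self_eq_zero (p : Fin n → Fin 4) : pprod p p = fun _ => 0 := by
  funext i; exact pmul_self (p i)

lemma pprod_eq_zero_iff {p q : Fin n → Fin 4} : pprod p q = (fun _ => 0) ↔ p = q := by
  constructor
  · intro h; funext i
    have := congrFun h i
    exact pmul_eq_zero_iff.mp this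
  · rintro rfl; exact pprod_self_eq_zero p

lemma trace_PauliOp_mul (p q : Fin n → Fin 4) :
    Matrix.trace (PauliOp p * PauliOp q) = if p = q then (2 ^ n : ℂ) else 0 := by
  rw [PauliOp_mul, Matrix.trace_smul, trace_PauliOp]
  by_cases h : p = q
  · subst h; simp [pprod_self_eq_zero, pphase_self]
  · have : ¬ (pprod p q = fun _ => 0) := fun hc => h (pprod_eq_zero_iff.mp hc)
    simp [h, this]

lemma conj_pauli1 (a : Fin 4) (i j : Fin 2) :
    (starRingEnd ℂ) (pauli1 a i j) = pauli1 a j i := by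
  fin_cases a <;> fin_cases i <;> fin_cases j <;> simp [pauli1, Matrix.one_apply]

lemma conj_PauliOp (p : Fin n → Fin 4) (x y : Fin n → Fin 2) :
    (starRingEnd ℂ) (PauliOp p x y) = PauliOp p y x := by
  show (starRingEnd ℂ) (∏ i, pauli1 (p i) (x i) (y i)) = _
  rw [map_prod]
  apply Finset.prod_congr rfl
  intro i _; exact conj_pauli1 _ _ _

section Expansion
variable {n : ℕ}

lemma two_pow_ne (n : ℕ) : (2 ^ n : ℂ) ≠ 0 := pow_ne_zero _ two_ne_zero

lemma pauliCoeff_expansion (𝒬 : Finset (Fin n → Fin 4)) (c : (Fin n → Fin 4) → ℂ)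
    (p : Fin n → Fin 4) :
    pauliCoeff (∑ q ∈ 𝒬, c q • PauliOp q) p = if p ∈ 𝒬 then c p else 0 := by
  rw [pauliCoeff, Matrix.sum_mul]
  have h1 : ∀ q ∈ 𝒬, (c q • PauliOp q) * PauliOp p = c q • (PauliOp q * PauliOp p) := by
    intro q _; rw [Matrix.smul_mul]
  rw [Finset.sum_congr rfl h1, Matrix.trace_sum]
  have h2 : ∀ q ∈ 𝒬, Matrix.trace (c q • (PauliOp q * PauliOp p))
      = c q * (if q = p then (2 ^ n : ℂ) else 0) := by
    intro q _; rw [Matrix.trace_smul, trace_PauliOp_mul, smul_eq_mul]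
  rw [Finset.sum_congr rfl h2]
  simp_rw [mul_ite, mul_zero]
  rw [Finset.sum_ite_eq' 𝒬 p (fun q => c q * (2 ^ n : ℂ))]
  by_cases hp : p ∈ 𝒬
  · simp only [hp, if_true]
    field_simp
  · simp [hp]

lemma parseval_expansion (𝒬 : Finset (Fin n → Fin 4)) (c : (Fin n → Fin 4) → ℂ) :
    ∑ x : Fin n → Fin 2, ∑ y : Fin n → Fin 2,
      ‖(∑ q ∈ 𝒬, c q • PauliOp q) x y‖ ^ 2
    = 2 ^ n * ∑ q ∈ 𝒬, ‖c q‖ ^ 2 := by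
  set M := ∑ q ∈ 𝒬, c q • PauliOp q with hM
  have entry : ∀ x y, M x y = ∑ q ∈ 𝒬, c q * PauliOp q x y := by
    intro x y; rw [hM, Matrix.sum_apply]
    apply Finset.sum_congr rfl; intro q _
    rw [Matrix.smul_apply, smul_eq_mul]
  have key : ∑ x : Fin n → Fin 2, ∑ y : Fin n → Fin 2, (M x y * (starRingEnd ℂ) (M x y))
      = (2 ^ n : ℂ) * ∑ q ∈ 𝒬, (c q * (starRingEnd ℂ) (c q)) := by
    have expand : ∀ x y, M x y * (starRingEnd ℂ) (M x y)
        = ∑ q ∈ 𝒬, ∑ q' ∈ 𝒬, (c q * (starRingEnd ℂ) (c q')) *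
            (PauliOp q x y * PauliOp q' y x) := by
      intro x y
      rw [entry, map_sum, Finset.sum_mul_sum]
      apply Finset.sum_congr rfl; intro q _
      apply Finset.sum_congr rfl; intro q' _
      rw [_root_.map_mul, conj_PauliOp]
      ring
    have swap1 : ∑ x : Fin n → Fin 2, ∑ y : Fin n → Fin 2, (M x y * (starRingEnd ℂ) (M x y))
        = ∑ q ∈ 𝒬, ∑ q' ∈ 𝒬, ∑ x : Fin n → Fin 2, ∑ y : Fin n → Fin 2,
            (c q * (starRingEnd ℂ) (c q')) * (PauliOp q x y * PauliOp q' y x) := by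
      simp_rw [expand]
      calc ∑ x : Fin n → Fin 2, ∑ y : Fin n → Fin 2, ∑ q ∈ 𝒬, ∑ q' ∈ 𝒬,
              (c q * (starRingEnd ℂ) (c q')) * (PauliOp q x y * PauliOp q' y x)
          = ∑ x : Fin n → Fin 2, ∑ q ∈ 𝒬, ∑ y : Fin n → Fin 2, ∑ q' ∈ 𝒬,
              (c q * (starRingEnd ℂ) (c q')) * (PauliOp q x y * PauliOp q' y x) :=
            Finset.sum_congr rfl (fun x _ => Finset.sum_comm)
        _ = ∑ q ∈ 𝒬, ∑ x : Fin n → Fin 2, ∑ y : Fin n → Fin 2, ∑ q' ∈ 𝒬,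
              (c q * (starRingEnd ℂ) (c q')) * (PauliOp q x y * PauliOp q' y x) :=
            Finset.sum_comm
        _ = ∑ q ∈ 𝒬, ∑ x : Fin n → Fin 2, ∑ q' ∈ 𝒬, ∑ y : Fin n → Fin 2,
              (c q * (starRingEnd ℂ) (c q')) * (PauliOp q x y * PauliOp q' y x) :=
            Finset.sum_congr rfl (fun q _ => Finset.sum_congr rfl (fun x _ => Finset.sum_comm))
        _ = ∑ q ∈ 𝒬, ∑ q' ∈ 𝒬, ∑ x : Fin n → Fin 2, ∑ y : Fin n → Fin 2,
              (c q * (starRingEnd ℂ) (c q')) * (PauliOp q x y * PauliOp q' y x) :=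
            Finset.sum_congr rfl (fun q _ => Finset.sum_comm)
    rw [swap1]
    have inner : ∀ q q', (∑ x : Fin n → Fin 2, ∑ y : Fin n → Fin 2,
        (c q * (starRingEnd ℂ) (c q')) * (PauliOp q x y * PauliOp q' y x))
        = (c q * (starRingEnd ℂ) (c q')) * (if q = q' then (2 ^ n : ℂ) else 0) := by
      intro q q'
      simp_rw [← Finset.mul_sum]
      congr 1
      rw [← trace_PauliOp_mul q q']
      simp only [Matrix.trace, Matrix.diag, Matrix.mul_apply]
    rw [Finset.sum_congr rfl (fun q _ => Finset.sum_congr rfl (fun q' _ => inner q q'))]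
    simp_rw [mul_ite, mul_zero]
    rw [Finset.mul_sum]
    apply Finset.sum_congr rfl; intro q hq
    rw [Finset.sum_ite_eq 𝒬 q (fun q' => c q * (starRingEnd ℂ) (c q') * (2 ^ n : ℂ))]
    rw [if_pos hq]; ring
  have cast1 : ∀ z : ℂ, z * (starRingEnd ℂ) z = ((‖z‖ ^ 2 : ℝ) : ℂ) := by
    intro z; rw [Complex.mul_conj, Complex.sq_norm]
  apply Complex.ofReal_injective
  calc ((∑ x : Fin n → Fin 2, ∑ y : Fin n → Fin 2, ‖M x y‖ ^ 2 : ℝ) : ℂ)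
      = ∑ x : Fin n → Fin 2, ∑ y : Fin n → Fin 2, ((‖M x y‖ ^ 2 : ℝ) : ℂ) := by
        push_cast; rfl
    _ = ∑ x : Fin n → Fin 2, ∑ y : Fin n → Fin 2, (M x y * (starRingEnd ℂ) (M x y)) := by
        simp_rw [← cast1]
    _ = (2 ^ n : ℂ) * ∑ q ∈ 𝒬, (c q * (starRingEnd ℂ) (c q)) := key
    _ = ((2 ^ n * ∑ q ∈ 𝒬, ‖c q‖ ^ 2 : ℝ) : ℂ) := by
        simp_rw [cast1]; push_cast; ring

lemma frobNorm_expansion (𝒬 : Finset (Fin n → Fin 4)) (c : (Fin n → Fin 4) → ℂ) :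
    frobNorm (∑ q ∈ 𝒬, c q • PauliOp q)
      = Real.sqrt (2 ^ n * ∑ q ∈ 𝒬, ‖c q‖ ^ 2) := by
  rw [frobNorm, parseval_expansion]

lemma coeffsum_expansion (𝒬 : Finset (Fin n → Fin 4)) (c : (Fin n → Fin 4) → ℂ) (i : Fin n) :
    (∑ p : Fin n → Fin 4,
      if i ∈ psupp p then ‖pauliCoeff (∑ q ∈ 𝒬, c q • PauliOp q) p‖ ^ 2 else 0)
    = ∑ q ∈ 𝒬.filter (fun q => i ∈ psupp q), ‖c q‖ ^ 2 := by
  have h1 : ∀ p : Fin n → Fin 4,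
      (if i ∈ psupp p then ‖pauliCoeff (∑ q ∈ 𝒬, c q • PauliOp q) p‖ ^ 2 else 0)
      = if p ∈ 𝒬.filter (fun q => i ∈ psupp q) then ‖c p‖ ^ 2 else 0 := by
    intro p
    rw [pauliCoeff_expansion]
    by_cases h2 : i ∈ psupp p <;> by_cases h3 : p ∈ 𝒬 <;>
      simp [h2, h3, Finset.mem_filter]
  rw [Finset.sum_congr rfl (fun p _ => h1 p)]
  rw [← Finset.sum_filter_add_sum_filter_not Finset.univ
    (fun p => p ∈ 𝒬.filter (fun q => i ∈ psupp q))]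
  have hz : ∑ p ∈ Finset.univ.filter
      (fun p => ¬ p ∈ 𝒬.filter (fun q => i ∈ psupp q)),
      (if p ∈ 𝒬.filter (fun q => i ∈ psupp q) then ‖c p‖ ^ 2 else 0) = 0 := by
    apply Finset.sum_eq_zero; intro p hp
    rw [Finset.mem_filter] at hp
    rw [if_neg hp.2]
  rw [hz, add_zero]
  have hs : Finset.univ.filter (fun p => p ∈ 𝒬.filter (fun q => i ∈ psupp q))
      = 𝒬.filter (fun q => i ∈ psupp q) := by
    ext q; simp
  rw [hs]
  apply Finset.sum_congr rfl; intro q hq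
  rw [if_pos hq]

lemma ltnorm_nonneg (M : QMat n) : 0 ≤ ltnorm M :=
  Real.iSup_nonneg (fun _ => Real.sqrt_nonneg _)

lemma frobNorm_nonneg (M : QMat n) : 0 ≤ frobNorm M := Real.sqrt_nonneg _

lemma le_ltnorm (M : QMat n) (i : Fin n) :
    Real.sqrt (∑ p : Fin n → Fin 4,
      if i ∈ psupp p then ‖pauliCoeff M p‖ ^ 2 else 0) ≤ ltnorm M := by
  rw [ltnorm]
  exact le_ciSup (f := fun i : Fin n => Real.sqrt (∑ p : Fin n → Fin 4,
    if i ∈ psupp p then ‖pauliCoeff M p‖ ^ 2 else 0))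
    ((Set.finite_range _).bddAbove) i

lemma ltnorm_le {M : QMat n} {B : ℝ} (hB : 0 ≤ B)
    (h : ∀ i : Fin n, Real.sqrt (∑ p : Fin n → Fin 4,
      if i ∈ psupp p then ‖pauliCoeff M p‖ ^ 2 else 0) ≤ B) :
    ltnorm M ≤ B := by
  rcases isEmpty_or_nonempty (Fin n) with he | hne
  · rw [ltnorm, Real.iSup_of_isEmpty]; exact hB
  · exact ciSup_le h

end Expansion

section Counting
variable {ι : Type*} [DecidableEq ι] [LinearOrder ι]

/-- The number of subsets of `W` of size at most `k` is at most `(|W|+1)^k`. -/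
lemma count_subsets (k : ℕ) (W : Finset ι) (𝒮 : Finset (Finset ι))
    (h : ∀ s ∈ 𝒮, s ⊆ W ∧ s.card ≤ k) : 𝒮.card ≤ (W.card + 1) ^ k := by
  induction k generalizing 𝒮 with
  | zero =>
    rw [pow_zero]
    rw [Finset.card_le_one]
    intro a ha b hb
    have ha' : a = ∅ := Finset.card_eq_zero.mp (Nat.le_zero.mp (h a ha).2)
    have hb' : b = ∅ := Finset.card_eq_zero.mp (Nat.le_zero.mp (h b hb).2)
    rw [ha', hb']
  | succ k ih =>
    classical
    have hsplit := Finset.card_filter_add_card_filter_not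
      (s := 𝒮) (p := fun s => s = ∅)
    set 𝒮e := 𝒮.filter (fun s => s = ∅) with h𝒮e
    set 𝒮n := 𝒮.filter (fun s => ¬ s = ∅) with h𝒮n
    have h1 : 𝒮e.card ≤ 1 := by
      rw [Finset.card_le_one]
      intro a ha b hb
      rw [Finset.mem_filter] at ha hb
      rw [ha.2, hb.2]
    set T := W.powerset.filter (fun t => t.card ≤ k) with hT
    have hTcard : T.card ≤ (W.card + 1) ^ k := by
      apply ih
      intro t ht
      rw [hT, Finset.mem_filter, Finset.mem_powerset] at ht
      exact ht
    have h2 : 𝒮n.card ≤ W.card * (W.card + 1) ^ k := by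
      rcases 𝒮n.eq_empty_or_nonempty with hemp | ⟨s₀, hs₀⟩
      · rw [hemp]; simp
      haveI : Nonempty ι := by
        rw [h𝒮n, Finset.mem_filter] at hs₀
        obtain ⟨x, hx⟩ := Finset.nonempty_iff_ne_empty.mpr hs₀.2
        exact ⟨x⟩
      have : 𝒮n.card ≤ (W ×ˢ T).card := by
        apply Finset.card_le_card_of_injOn
          (fun s => (if hs : s.Nonempty then s.min' hs else Classical.arbitrary _,
            if hs : s.Nonempty then s.erase (s.min' hs) else ∅))
        · intro s hs
          rw [Finset.mem_coe, h𝒮n, Finset.mem_filter] at hs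
          have hne : s.Nonempty := Finset.nonempty_iff_ne_empty.mpr hs.2
          simp only [Finset.mem_coe]
          rw [dif_pos hne, dif_pos hne]
          rw [Finset.mem_product]
          constructor
          · exact (h s hs.1).1 (s.min'_mem hne)
          · rw [hT, Finset.mem_filter, Finset.mem_powerset]
            constructor
            · exact (Finset.erase_subset _ _).trans (h s hs.1).1
            · have := Finset.card_erase_of_mem (s.min'_mem hne)
              rw [this]
              have := (h s hs.1).2
              omega
        · intro s hs s' hs' heq
          rw [Finset.mem_coe, h𝒮n, Finset.mem_filter] at hs hs'
          have hne : s.Nonempty := Finset.nonempty_iff_ne_empty.mpr hs.2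
          have hne' : s'.Nonempty := Finset.nonempty_iff_ne_empty.mpr hs'.2
          rw [Prod.mk.injEq, dif_pos hne, dif_pos hne, dif_pos hne', dif_pos hne'] at heq
          have h5 := Finset.insert_erase (s.min'_mem hne)
          rw [heq.2, heq.1, Finset.insert_erase (s'.min'_mem hne')] at h5
          exact h5.symm
      calc 𝒮n.card ≤ (W ×ˢ T).card := this
        _ = W.card * T.card := Finset.card_product W T
        _ ≤ W.card * (W.card + 1) ^ k := Nat.mul_le_mul_left _ hTcard
    have hpow : 1 ≤ (W.card + 1) ^ k := Nat.one_le_pow _ _ (by omega)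
    calc 𝒮.card = 𝒮e.card + 𝒮n.card := hsplit.symm
      _ ≤ 1 + W.card * (W.card + 1) ^ k := Nat.add_le_add h1 h2
      _ ≤ (W.card + 1) ^ k + W.card * (W.card + 1) ^ k := Nat.add_le_add_right hpow _
      _ = (W.card + 1) ^ (k + 1) := by ring
end Counting

section CountingPauli
variable {n m : ℕ}

/-- At most `4^|V|` Paulis have support exactly `V`. -/
lemma card_fixed_supp (E : Fin m → Fin n → Fin 4) (hE : Function.Injective E)
    (V : Finset (Fin n)) :
    (Finset.univ.filter fun a => psupp (E a) = V).card ≤ 4 ^ V.card := by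
  classical
  have : (Finset.univ.filter fun a => psupp (E a) = V).card
      ≤ (Finset.univ : Finset ({x // x ∈ V} → Fin 4)).card := by
    apply Finset.card_le_card_of_injOn (fun a => fun j => E a j.val)
    · intro a _; exact Finset.mem_univ _
    · intro a ha a' ha' heq
      rw [Finset.mem_coe, Finset.mem_filter] at ha ha'
      apply hE
      funext j
      by_cases hj : j ∈ V
      · exact congrFun heq ⟨j, hj⟩
      · have h1 : E a j = 0 := by
          by_contra hc
          have : j ∈ psupp (E a) := by
            rw [psupp, Finset.mem_filter]; exact ⟨Finset.mem_univ _, hc⟩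
          rw [ha.2] at this; exact hj this
        have h2 : E a' j = 0 := by
          by_contra hc
          have : j ∈ psupp (E a') := by
            rw [psupp, Finset.mem_filter]; exact ⟨Finset.mem_univ _, hc⟩
          rw [ha'.2] at this; exact hj this
        rw [h1, h2]
  calc (Finset.univ.filter fun a => psupp (E a) = V).card
      ≤ (Finset.univ : Finset ({x // x ∈ V} → Fin 4)).card := this
    _ = 4 ^ V.card := by
        rw [Finset.card_univ, Fintype.card_fun]
        congr 1
        exact Fintype.card_coe V
end CountingPauli

section Core
open Finset
variable {n m m' : ℕ}

lemma mem_psupp_iff {p : Fin n → Fin 4} {j : Fin n} : j ∈ psupp p ↔ p j ≠ 0 := by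
  rw [psupp, Finset.mem_filter]
  simp

lemma psupp_pprod_subset (p q : Fin n → Fin 4) :
    psupp (pprod p q) ⊆ psupp p ∪ psupp q := by
  intro j hj
  rw [mem_psupp_iff] at hj
  rw [Finset.mem_union, mem_psupp_iff, mem_psupp_iff]
  by_contra hc
  push_neg at hc
  rw [pprod] at hj
  rw [hc.1, hc.2] at hj
  exact hj rfl

variable (lam : Fin m → ℝ) (kap : Fin m' → ℝ)
variable (E : Fin m → Fin n → Fin 4) (F : Fin m' → Fin n → Fin 4)

/-- product Pauli label of a pair of terms -/
def prodP (p : Fin m × Fin m') : Fin n → Fin 4 := pprod (E p.1) (F p.2)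

/-- class of a pair: intersection of the support of its H-term with the support of the
product Pauli -/
def sigP (p : Fin m × Fin m') : Finset (Fin n) := psupp (E p.1) ∩ psupp (prodP E F p)

/-- total weight of H-terms whose support contains `s` -/
def Msig (s : Finset (Fin n)) : ℝ :=
  ∑ a ∈ Finset.univ.filter (fun a => s ⊆ psupp (E a)), (lam a) ^ 2

/-- weight of a pair -/
def wgt (p : Fin m × Fin m') : ℝ := |lam p.1| * |kap p.2|

lemma Msig_nonneg (s : Finset (Fin n)) : 0 ≤ Msig lam E s :=
  Finset.sum_nonneg (fun _ _ => sq_nonneg _)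

lemma wgt_nonneg (p : Fin m × Fin m') : 0 ≤ wgt lam kap p :=
  mul_nonneg (abs_nonneg _) (abs_nonneg _)

/-- in a fiber of `prodP`, the second component is determined by the first -/
lemma snd_determined (hF : Function.Injective F) {p p' : Fin m × Fin m'}
    (h1 : prodP E F p = prodP E F p') (h2 : p.1 = p'.1) : p = p' := by
  have hFp : F p.2 = F p'.2 := by
    funext j
    have hq := congrFun h1 j
    rw [prodP, prodP, pprod, pprod] at hq
    have e1 : F p.2 j = pmul (E p.1 j) (pmul (E p.1 j) (F p.2 j)) := (pmul_cancel _ _).symm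
    rw [e1, hq, h2, pmul_cancel]
  have := hF hFp
  exact Prod.ext h2 this

lemma sigP_subset_suppE (p : Fin m × Fin m') : sigP E F p ⊆ psupp (E p.1) :=
  Finset.inter_subset_left

lemma sigP_subset_prod (p : Fin m × Fin m') : sigP E F p ⊆ psupp (prodP E F p) :=
  Finset.inter_subset_right

/-- anticommuting pairs have an anticommuting site inside `sigP ∩ supp F` -/
lemma anchor_site {p : Fin m × Fin m'}
    (hac : ∃ j, E p.1 j ≠ 0 ∧ F p.2 j ≠ 0 ∧ E p.1 j ≠ F p.2 j) :
    ∃ j, j ∈ sigP E F p ∧ j ∈ psupp (F p.2) := by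
  obtain ⟨j, h1, h2, h3⟩ := hac
  refine ⟨j, ?_, mem_psupp_iff.mpr h2⟩
  rw [sigP, Finset.mem_inter, mem_psupp_iff, mem_psupp_iff]
  refine ⟨h1, ?_⟩
  rw [prodP, pprod]
  intro hc
  exact h3 (pmul_eq_zero_iff.mp hc)

/-- sites in the support of the H-term but not in the class are in the support of
the G-term -/
lemma off_class_in_suppF {p : Fin m × Fin m'} {j : Fin n}
    (hj1 : j ∈ psupp (E p.1)) (hj2 : j ∉ sigP E F p) : j ∈ psupp (F p.2) := by
  have hj3 : j ∉ psupp (prodP E F p) := by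
    intro hc
    exact hj2 (Finset.mem_inter.mpr ⟨hj1, hc⟩)
  rw [mem_psupp_iff] at hj1 ⊢
  rw [mem_psupp_iff] at hj3
  push_neg at hj3
  rw [prodP, pprod] at hj3
  have : E p.1 j = F p.2 j := pmul_eq_zero_iff.mp hj3
  rw [← this]
  exact hj1

/-- if the product Pauli acts on `j` but the G-term does not, then `j` is in the class -/
lemma loc_in_class {p : Fin m × Fin m'} {j : Fin n}
    (hj1 : j ∈ psupp (prodP E F p)) (hj2 : j ∉ psupp (F p.2)) : j ∈ sigP E F p := by
  have hF0 : F p.2 j = 0 := by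
    by_contra hc; exact hj2 (mem_psupp_iff.mpr hc)
  rw [sigP, Finset.mem_inter]
  refine ⟨?_, hj1⟩
  rw [mem_psupp_iff]
  intro hc
  have hne := mem_psupp_iff.mp hj1
  rw [prodP, pprod, hc, hF0] at hne
  exact hne rfl

/-- Count of H-terms pairing with a fixed G-term in a fixed class. -/
lemma fiber_ab_count (hE : Function.Injective E) {k k' : ℕ}
    (hEk : KLocal E k) (hFk : KLocal F k')
    (P : Finset (Fin m × Fin m')) (s : Finset (Fin n)) (b : Fin m') :
    ((P.filter (fun p => sigP E F p = s)).filter (fun p => p.2 = b)).card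
      ≤ 4 ^ k * (k' + 1) ^ k := by
  classical
  set X := (P.filter (fun p => sigP E F p = s)).filter (fun p => p.2 = b) with hX
  set A := X.image Prod.fst with hA
  have hXA : X.card = A.card := by
    rw [hA]
    rw [Finset.card_image_of_injOn]
    intro p hp p' hp' heq
    rw [Finset.mem_coe, hX, Finset.mem_filter] at hp hp'
    have : p.2 = p'.2 := by rw [hp.2, hp'.2]
    exact Prod.ext heq this
  -- for each a in A, s ⊆ psupp (E a) and psupp (E a) \ s ⊆ psupp (F b)
  have hAfact : ∀ a ∈ A, s ⊆ psupp (E a) ∧ psupp (E a) \ s ⊆ psupp (F b) := by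
    intro a ha
    rw [hA, Finset.mem_image] at ha
    obtain ⟨p, hp, hpa⟩ := ha
    rw [hX, Finset.mem_filter, Finset.mem_filter] at hp
    obtain ⟨⟨_, hsig⟩, hsnd⟩ := hp
    constructor
    · rw [← hsig, ← hpa]; exact sigP_subset_suppE E F p
    · intro j hj
      rw [Finset.mem_sdiff, ← hpa] at hj
      rw [← hsnd]
      exact off_class_in_suppF E F hj.1 (by rw [hsig]; exact hj.2)
  -- partition A by the support of the H-term
  set ψ : Fin m → Finset (Fin n) := fun a => psupp (E a) with hψ
  have hcard1 : A.card ≤ (A.image ψ).card * 4 ^ k := by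
    rw [Finset.card_eq_sum_card_fiberwise
      (f := ψ) (t := A.image ψ) (fun x hx => Finset.mem_image_of_mem _ hx)]
    have hfib : ∀ V ∈ A.image ψ, (A.filter (fun a => ψ a = V)).card ≤ 4 ^ k := by
      intro V hV
      rw [Finset.mem_image] at hV
      obtain ⟨a₀, ha₀, hV0⟩ := hV
      have hVk : V.card ≤ k := by
        rw [← hV0]; exact hEk a₀
      calc (A.filter (fun a => ψ a = V)).card
          ≤ (Finset.univ.filter (fun a => psupp (E a) = V)).card := by
            apply Finset.card_le_card
            intro a ha
            rw [Finset.mem_filter] at ha ⊢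
            exact ⟨Finset.mem_univ _, ha.2⟩
        _ ≤ 4 ^ V.card := card_fixed_supp E hE V
        _ ≤ 4 ^ k := Nat.pow_le_pow_right (by norm_num) hVk
    calc ∑ V ∈ A.image ψ, (A.filter (fun a => ψ a = V)).card
        ≤ ∑ V ∈ A.image ψ, 4 ^ k := Finset.sum_le_sum hfib
      _ = (A.image ψ).card * 4 ^ k := by rw [Finset.sum_const, smul_eq_mul]
  -- count the possible supports
  have hcard2 : (A.image ψ).card ≤ (k' + 1) ^ k := by
    have hinj : Set.InjOn (fun V => V \ s) ↑(A.image ψ) := by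
      intro V hV V' hV' heq
      rw [Finset.mem_coe, Finset.mem_image] at hV hV'
      obtain ⟨a, ha, hVa⟩ := hV
      obtain ⟨a', ha', hVa'⟩ := hV'
      have h1 : s ⊆ V := by rw [← hVa]; exact (hAfact a ha).1
      have h2 : s ⊆ V' := by rw [← hVa']; exact (hAfact a' ha').1
      have heq' : V \ s = V' \ s := heq
      have e1 := Finset.union_sdiff_of_subset h1
      have e2 := Finset.union_sdiff_of_subset h2
      rw [← e1, ← e2, heq']
    have heqc : (A.image ψ).card = ((A.image ψ).image (fun V => V \ s)).card :=
      (Finset.card_image_of_injOn hinj).symm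
    have hsub : ∀ t ∈ (A.image ψ).image (fun V => V \ s),
        t ⊆ psupp (F b) ∧ t.card ≤ k := by
      intro t ht
      rw [Finset.mem_image] at ht
      obtain ⟨V, hV, hVt⟩ := ht
      rw [Finset.mem_image] at hV
      obtain ⟨a, ha, hVa⟩ := hV
      constructor
      · rw [← hVt, ← hVa]; exact (hAfact a ha).2
      · have hts : t ⊆ V := by rw [← hVt]; exact Finset.sdiff_subset
        calc t.card ≤ V.card := Finset.card_le_card hts
          _ ≤ k := by rw [← hVa]; exact hEk a
    calc (A.image ψ).card = ((A.image ψ).image (fun V => V \ s)).card := heqc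
      _ ≤ ((psupp (F b)).card + 1) ^ k := count_subsets k _ _ hsub
      _ ≤ (k' + 1) ^ k := Nat.pow_le_pow_left (by have := hFk b; omega) k
  calc X.card = A.card := hXA
    _ ≤ (A.image ψ).card * 4 ^ k := hcard1
    _ ≤ (k' + 1) ^ k * 4 ^ k := Nat.mul_le_mul_right _ hcard2
    _ = 4 ^ k * (k' + 1) ^ k := Nat.mul_comm _ _

lemma sum_Msig_mem {k : ℕ} (hEk : KLocal E k) {L2 : ℝ}
    (hL : ∀ j : Fin n, ∑ a ∈ Finset.univ.filter (fun a => j ∈ psupp (E a)), (lam a) ^ 2 ≤ L2)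
    (𝒮 : Finset (Finset (Fin n))) (j : Fin n) (h𝒮 : ∀ s ∈ 𝒮, j ∈ s) :
    ∑ s ∈ 𝒮, Msig lam E s ≤ 2 ^ k * L2 := by
  classical
  have swap : ∑ s ∈ 𝒮, Msig lam E s
      = ∑ a : Fin m, ∑ s ∈ 𝒮.filter (fun s => s ⊆ psupp (E a)), (lam a) ^ 2 := by
    calc ∑ s ∈ 𝒮, Msig lam E s
        = ∑ s ∈ 𝒮, ∑ a : Fin m, (if s ⊆ psupp (E a) then (lam a) ^ 2 else 0) := by
          apply Finset.sum_congr rfl; intro s _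
          rw [Msig, Finset.sum_filter]
      _ = ∑ a : Fin m, ∑ s ∈ 𝒮, (if s ⊆ psupp (E a) then (lam a) ^ 2 else 0) :=
          Finset.sum_comm
      _ = ∑ a : Fin m, ∑ s ∈ 𝒮.filter (fun s => s ⊆ psupp (E a)), (lam a) ^ 2 := by
          apply Finset.sum_congr rfl; intro a _
          rw [Finset.sum_filter]
  rw [swap]
  have hbd : ∀ a : Fin m, ∑ s ∈ 𝒮.filter (fun s => s ⊆ psupp (E a)), (lam a) ^ 2
      ≤ (if j ∈ psupp (E a) then (2 ^ k : ℝ) * (lam a) ^ 2 else 0) := by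
    intro a
    by_cases hj : j ∈ psupp (E a)
    · rw [if_pos hj]
      rw [Finset.sum_const]
      have hcard : (𝒮.filter (fun s => s ⊆ psupp (E a))).card ≤ 2 ^ k := by
        calc (𝒮.filter (fun s => s ⊆ psupp (E a))).card
            ≤ (psupp (E a)).powerset.card := by
              apply Finset.card_le_card
              intro s hs
              rw [Finset.mem_filter] at hs
              rw [Finset.mem_powerset]
              exact hs.2
          _ = 2 ^ (psupp (E a)).card := Finset.card_powerset _
          _ ≤ 2 ^ k := Nat.pow_le_pow_right (by norm_num) (hEk a)
      rw [nsmul_eq_mul]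
      apply mul_le_mul_of_nonneg_right _ (sq_nonneg _)
      calc ((𝒮.filter (fun s => s ⊆ psupp (E a))).card : ℝ) ≤ ((2 ^ k : ℕ) : ℝ) := by
            exact_mod_cast hcard
        _ = (2 ^ k : ℝ) := by push_cast; ring
    · rw [if_neg hj]
      have : 𝒮.filter (fun s => s ⊆ psupp (E a)) = ∅ := by
        apply Finset.filter_eq_empty_iff.mpr
        intro s hs hc
        exact hj (hc (h𝒮 s hs))
      rw [this, Finset.sum_empty]
  calc ∑ a : Fin m, ∑ s ∈ 𝒮.filter (fun s => s ⊆ psupp (E a)), (lam a) ^ 2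
      ≤ ∑ a : Fin m, (if j ∈ psupp (E a) then (2 ^ k : ℝ) * (lam a) ^ 2 else 0) :=
        Finset.sum_le_sum (fun a _ => hbd a)
    _ = (2 ^ k : ℝ) * ∑ a ∈ Finset.univ.filter (fun a => j ∈ psupp (E a)), (lam a) ^ 2 := by
        rw [← Finset.sum_filter, Finset.mul_sum]
    _ ≤ 2 ^ k * L2 := by
        apply mul_le_mul_of_nonneg_left (hL j) (by positivity)

lemma sum_Msig_touch {k : ℕ} (hEk : KLocal E k) {L2 : ℝ}
    (hL : ∀ j : Fin n, ∑ a ∈ Finset.univ.filter (fun a => j ∈ psupp (E a)), (lam a) ^ 2 ≤ L2)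
    (hL2 : 0 ≤ L2)
    (𝒮 : Finset (Finset (Fin n))) (T' : Finset (Fin n))
    (h : ∀ s ∈ 𝒮, ∃ j ∈ T', j ∈ s) :
    ∑ s ∈ 𝒮, Msig lam E s ≤ T'.card * (2 ^ k * L2) := by
  classical
  have h1 : ∀ s ∈ 𝒮, Msig lam E s ≤ ∑ j ∈ T', (if j ∈ s then Msig lam E s else 0) := by
    intro s hs
    obtain ⟨j0, hj0T, hj0s⟩ := h s hs
    have := Finset.single_le_sum (f := fun j => if j ∈ s then Msig lam E s else 0)
      (fun j _ => by
        split_ifs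
        · exact Msig_nonneg lam E s
        · exact le_refl 0) hj0T
    rw [if_pos hj0s] at this
    exact this
  calc ∑ s ∈ 𝒮, Msig lam E s
      ≤ ∑ s ∈ 𝒮, ∑ j ∈ T', (if j ∈ s then Msig lam E s else 0) :=
        Finset.sum_le_sum h1
    _ = ∑ j ∈ T', ∑ s ∈ 𝒮, (if j ∈ s then Msig lam E s else 0) := Finset.sum_comm
    _ = ∑ j ∈ T', ∑ s ∈ 𝒮.filter (fun s => j ∈ s), Msig lam E s := by
        apply Finset.sum_congr rfl; intro j _
        rw [Finset.sum_filter]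
    _ ≤ ∑ j ∈ T', (2 ^ k * L2 : ℝ) := by
        apply Finset.sum_le_sum
        intro j _
        apply sum_Msig_mem lam E hEk hL _ j
        intro s hs
        exact (Finset.mem_filter.mp hs).2
    _ = T'.card * (2 ^ k * L2) := by
        rw [Finset.sum_const, nsmul_eq_mul]

lemma sq_sum_le_card_mul (S : Finset (Finset (Fin n))) (g : Finset (Fin n) → ℝ) :
    (∑ s ∈ S, g s) ^ 2 ≤ (S.card : ℝ) * ∑ s ∈ S, (g s) ^ 2 := by
  have h := Finset.sum_mul_sq_le_sq_mul_sq S (fun _ => (1 : ℝ)) g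
  simpa using h

lemma core_main (hE : Function.Injective E) (hF : Function.Injective F)
    {k k' : ℕ} (hEk : KLocal E k) (hFk : KLocal F k')
    (P : Finset (Fin m × Fin m')) :
    ∑ q ∈ P.image (prodP E F),
        (∑ p ∈ P.filter (fun p => prodP E F p = q), wgt lam kap p) ^ 2
    ≤ (((k + k' + 1) ^ k * (4 ^ k * (k' + 1) ^ k) : ℕ) : ℝ) *
        ∑ s ∈ P.image (sigP E F), Msig lam E s *
          (∑ b ∈ (P.filter (fun p => sigP E F p = s)).image Prod.snd, (kap b) ^ 2) := by
  classical
  -- Step A: per-q bound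
  have stepA : ∀ q ∈ P.image (prodP E F),
      (∑ p ∈ P.filter (fun p => prodP E F p = q), wgt lam kap p) ^ 2
      ≤ (((k + k' + 1) ^ k : ℕ) : ℝ) *
          ∑ s ∈ (P.filter (fun p => prodP E F p = q)).image (sigP E F),
            (Msig lam E s *
              ∑ p ∈ (P.filter (fun p => prodP E F p = q)).filter
                  (fun p => sigP E F p = s), (kap p.2) ^ 2) := by
    intro q hq
    set Pq := P.filter (fun p => prodP E F p = q) with hPq
    set S := Pq.image (sigP E F) with hS
    have e1 : ∑ p ∈ Pq, wgt lam kap p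
        = ∑ s ∈ S, ∑ p ∈ Pq.filter (fun p => sigP E F p = s), wgt lam kap p :=
      (Finset.sum_fiberwise_of_maps_to
        (fun p hp => Finset.mem_image_of_mem _ hp) _).symm
    rw [e1]
    have e2 := sq_sum_le_card_mul S
      (fun s => ∑ p ∈ Pq.filter (fun p => sigP E F p = s), wgt lam kap p)
    -- card of S
    have hW : (psupp q).card ≤ k + k' := by
      obtain ⟨p₀, hp₀, hq₀⟩ := Finset.mem_image.mp hq
      rw [← hq₀]
      calc (psupp (prodP E F p₀)).card
          ≤ (psupp (E p₀.1) ∪ psupp (F p₀.2)).card :=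
            Finset.card_le_card (psupp_pprod_subset _ _)
        _ ≤ (psupp (E p₀.1)).card + (psupp (F p₀.2)).card := Finset.card_union_le _ _
        _ ≤ k + k' := Nat.add_le_add (hEk p₀.1) (hFk p₀.2)
    have hScard : S.card ≤ (k + k' + 1) ^ k := by
      have h1 : S.card ≤ ((psupp q).card + 1) ^ k := by
        apply count_subsets k (psupp q)
        intro s hs
        rw [hS, Finset.mem_image] at hs
        obtain ⟨p, hp, hps⟩ := hs
        rw [hPq, Finset.mem_filter] at hp
        constructor
        · rw [← hps, ← hp.2]
          exact sigP_subset_prod E F p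
        · rw [← hps]
          calc (sigP E F p).card ≤ (psupp (E p.1)).card :=
              Finset.card_le_card (sigP_subset_suppE E F p)
            _ ≤ k := hEk p.1
      calc S.card ≤ ((psupp q).card + 1) ^ k := h1
        _ ≤ (k + k' + 1) ^ k := Nat.pow_le_pow_left (by omega) k
    -- per-class Cauchy-Schwarz
    have e3 : ∀ s ∈ S,
        (∑ p ∈ Pq.filter (fun p => sigP E F p = s), wgt lam kap p) ^ 2
        ≤ Msig lam E s *
            ∑ p ∈ Pq.filter (fun p => sigP E F p = s), (kap p.2) ^ 2 := by
      intro s hs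
      set X := Pq.filter (fun p => sigP E F p = s) with hXdef
      have cs := Finset.sum_mul_sq_le_sq_mul_sq X
        (fun p => |lam p.1|) (fun p => |kap p.2|)
      have cA : (∑ p ∈ X, |lam p.1| ^ 2) = ∑ p ∈ X, (lam p.1) ^ 2 :=
        Finset.sum_congr rfl (fun p _ => _root_.sq_abs _)
      have cB : (∑ p ∈ X, |kap p.2| ^ 2) = ∑ p ∈ X, (kap p.2) ^ 2 :=
        Finset.sum_congr rfl (fun p _ => _root_.sq_abs _)
      rw [cA, cB] at cs
      have e4 : ∑ p ∈ X, wgt lam kap p = ∑ p ∈ X, |lam p.1| * |kap p.2| := rfl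
      rw [e4]
      refine le_trans cs ?_
      apply mul_le_mul_of_nonneg_right _ (Finset.sum_nonneg fun p _ => sq_nonneg _)
      have hinj : ∀ p ∈ X, ∀ p' ∈ X, p.1 = p'.1 → p = p' := by
        intro p hp p' hp' hfst
        rw [hXdef, Finset.mem_filter, hPq, Finset.mem_filter] at hp hp'
        exact snd_determined E F hF (by rw [hp.1.2, hp'.1.2]) hfst
      have e6 : ∑ a ∈ X.image Prod.fst, (lam a) ^ 2 = ∑ p ∈ X, (lam p.1) ^ 2 :=
        Finset.sum_image hinj
      have e7 : ∑ a ∈ X.image Prod.fst, (lam a) ^ 2 ≤ Msig lam E s := by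
        rw [Msig]
        apply Finset.sum_le_sum_of_subset_of_nonneg
        · intro a ha
          rw [Finset.mem_image] at ha
          obtain ⟨p, hp, hpa⟩ := ha
          rw [hXdef, Finset.mem_filter] at hp
          rw [Finset.mem_filter]
          refine ⟨Finset.mem_univ _, ?_⟩
          rw [← hpa, ← hp.2]
          exact sigP_subset_suppE E F p
        · intro a _ _; exact sq_nonneg _
      rw [← e6]
      exact e7
    -- combine
    have e8 : ∑ s ∈ S,
        (∑ p ∈ Pq.filter (fun p => sigP E F p = s), wgt lam kap p) ^ 2
        ≤ ∑ s ∈ S, (Msig lam E s *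
            ∑ p ∈ Pq.filter (fun p => sigP E F p = s), (kap p.2) ^ 2) :=
      Finset.sum_le_sum e3
    refine le_trans e2 ?_
    apply mul_le_mul
    · exact_mod_cast hScard
    · exact e8
    · exact Finset.sum_nonneg fun s _ => sq_nonneg _
    · positivity
  -- Step B: sum over q and collapse
  have stepB : ∑ q ∈ P.image (prodP E F),
      (∑ p ∈ P.filter (fun p => prodP E F p = q), wgt lam kap p) ^ 2
      ≤ (((k + k' + 1) ^ k : ℕ) : ℝ) *
          ∑ p ∈ P, Msig lam E (sigP E F p) * (kap p.2) ^ 2 := by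
    have hcollapse : ∑ q ∈ P.image (prodP E F),
        ∑ s ∈ (P.filter (fun p => prodP E F p = q)).image (sigP E F),
          (Msig lam E s *
            ∑ p ∈ (P.filter (fun p => prodP E F p = q)).filter
                (fun p => sigP E F p = s), (kap p.2) ^ 2)
        = ∑ p ∈ P, Msig lam E (sigP E F p) * (kap p.2) ^ 2 := by
      have inner : ∀ q, ∑ s ∈ (P.filter (fun p => prodP E F p = q)).image (sigP E F),
          (Msig lam E s *
            ∑ p ∈ (P.filter (fun p => prodP E F p = q)).filter
                (fun p => sigP E F p = s), (kap p.2) ^ 2)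
          = ∑ p ∈ P.filter (fun p => prodP E F p = q),
              Msig lam E (sigP E F p) * (kap p.2) ^ 2 := by
        intro q
        have e1 : ∀ s ∈ (P.filter (fun p => prodP E F p = q)).image (sigP E F),
            (Msig lam E s *
              ∑ p ∈ (P.filter (fun p => prodP E F p = q)).filter
                  (fun p => sigP E F p = s), (kap p.2) ^ 2)
            = ∑ p ∈ (P.filter (fun p => prodP E F p = q)).filter
                (fun p => sigP E F p = s),
                Msig lam E (sigP E F p) * (kap p.2) ^ 2 := by
          intro s _
          rw [Finset.mul_sum]
          apply Finset.sum_congr rfl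
          intro p hp
          rw [(Finset.mem_filter.mp hp).2]
        rw [Finset.sum_congr rfl e1]
        exact Finset.sum_fiberwise_of_maps_to
          (fun p hp => Finset.mem_image_of_mem _ hp) _
      rw [Finset.sum_congr rfl (fun q _ => inner q)]
      exact Finset.sum_fiberwise_of_maps_to
        (fun p hp => Finset.mem_image_of_mem _ hp) _
    calc ∑ q ∈ P.image (prodP E F),
        (∑ p ∈ P.filter (fun p => prodP E F p = q), wgt lam kap p) ^ 2
        ≤ ∑ q ∈ P.image (prodP E F), ((((k + k' + 1) ^ k : ℕ) : ℝ) *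
            ∑ s ∈ (P.filter (fun p => prodP E F p = q)).image (sigP E F),
              (Msig lam E s *
                ∑ p ∈ (P.filter (fun p => prodP E F p = q)).filter
                    (fun p => sigP E F p = s), (kap p.2) ^ 2)) :=
          Finset.sum_le_sum stepA
      _ = (((k + k' + 1) ^ k : ℕ) : ℝ) * ∑ q ∈ P.image (prodP E F),
            ∑ s ∈ (P.filter (fun p => prodP E F p = q)).image (sigP E F),
              (Msig lam E s *
                ∑ p ∈ (P.filter (fun p => prodP E F p = q)).filter
                    (fun p => sigP E F p = s), (kap p.2) ^ 2) :=
          (Finset.mul_sum _ _ _).symm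
      _ = (((k + k' + 1) ^ k : ℕ) : ℝ) *
            ∑ p ∈ P, Msig lam E (sigP E F p) * (kap p.2) ^ 2 := by rw [hcollapse]
  -- Step C/D: regroup by class and count multiplicities
  have stepC : ∑ p ∈ P, Msig lam E (sigP E F p) * (kap p.2) ^ 2
      ≤ ((4 ^ k * (k' + 1) ^ k : ℕ) : ℝ) *
        ∑ s ∈ P.image (sigP E F), Msig lam E s *
          (∑ b ∈ (P.filter (fun p => sigP E F p = s)).image Prod.snd, (kap b) ^ 2) := by
    have e1 : ∑ p ∈ P, Msig lam E (sigP E F p) * (kap p.2) ^ 2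
        = ∑ s ∈ P.image (sigP E F), ∑ p ∈ P.filter (fun p => sigP E F p = s),
            Msig lam E s * (kap p.2) ^ 2 := by
      rw [← Finset.sum_fiberwise_of_maps_to
        (fun p hp => Finset.mem_image_of_mem (sigP E F) hp)
        (fun p => Msig lam E (sigP E F p) * (kap p.2) ^ 2)]
      apply Finset.sum_congr rfl
      intro s _
      apply Finset.sum_congr rfl
      intro p hp
      rw [(Finset.mem_filter.mp hp).2]
    rw [e1]
    have e2 : ∀ s ∈ P.image (sigP E F),
        ∑ p ∈ P.filter (fun p => sigP E F p = s), Msig lam E s * (kap p.2) ^ 2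
        ≤ Msig lam E s * (((4 ^ k * (k' + 1) ^ k : ℕ) : ℝ) *
            ∑ b ∈ (P.filter (fun p => sigP E F p = s)).image Prod.snd, (kap b) ^ 2) := by
      intro s _
      rw [← Finset.mul_sum]
      apply mul_le_mul_of_nonneg_left _ (Msig_nonneg lam E s)
      set Ps := P.filter (fun p => sigP E F p = s) with hPs
      have e3 : ∑ p ∈ Ps, (kap p.2) ^ 2
          = ∑ b ∈ Ps.image Prod.snd, ∑ p ∈ Ps.filter (fun p => p.2 = b),
              (kap p.2) ^ 2 :=
        (Finset.sum_fiberwise_of_maps_to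
          (fun p hp => Finset.mem_image_of_mem _ hp) _).symm
      rw [e3]
      rw [Finset.mul_sum]
      apply Finset.sum_le_sum
      intro b hb
      have e4 : ∑ p ∈ Ps.filter (fun p => p.2 = b), (kap p.2) ^ 2
          = ((Ps.filter (fun p => p.2 = b)).card : ℝ) * (kap b) ^ 2 := by
        rw [Finset.sum_congr rfl (fun p hp => by
          rw [(Finset.mem_filter.mp hp).2])]
        rw [Finset.sum_const, nsmul_eq_mul]
      rw [e4]
      apply mul_le_mul_of_nonneg_right _ (sq_nonneg _)
      have := fiber_ab_count E F hE hEk hFk P s b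
      exact_mod_cast this
    calc ∑ s ∈ P.image (sigP E F), ∑ p ∈ P.filter (fun p => sigP E F p = s),
            Msig lam E s * (kap p.2) ^ 2
        ≤ ∑ s ∈ P.image (sigP E F), Msig lam E s *
            (((4 ^ k * (k' + 1) ^ k : ℕ) : ℝ) *
              ∑ b ∈ (P.filter (fun p => sigP E F p = s)).image Prod.snd, (kap b) ^ 2) :=
          Finset.sum_le_sum e2
      _ = ((4 ^ k * (k' + 1) ^ k : ℕ) : ℝ) *
            ∑ s ∈ P.image (sigP E F), Msig lam E s *
              (∑ b ∈ (P.filter (fun p => sigP E F p = s)).image Prod.snd, (kap b) ^ 2) := by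
          rw [Finset.mul_sum]
          apply Finset.sum_congr rfl
          intro s _
          ring
  calc ∑ q ∈ P.image (prodP E F),
      (∑ p ∈ P.filter (fun p => prodP E F p = q), wgt lam kap p) ^ 2
      ≤ (((k + k' + 1) ^ k : ℕ) : ℝ) *
          ∑ p ∈ P, Msig lam E (sigP E F p) * (kap p.2) ^ 2 := stepB
    _ ≤ (((k + k' + 1) ^ k : ℕ) : ℝ) * (((4 ^ k * (k' + 1) ^ k : ℕ) : ℝ) *
          ∑ s ∈ P.image (sigP E F), Msig lam E s *
            (∑ b ∈ (P.filter (fun p => sigP E F p = s)).image Prod.snd, (kap b) ^ 2)) := by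
        apply mul_le_mul_of_nonneg_left stepC (by positivity)
    _ = (((k + k' + 1) ^ k * (4 ^ k * (k' + 1) ^ k) : ℕ) : ℝ) *
          ∑ s ∈ P.image (sigP E F), Msig lam E s *
            (∑ b ∈ (P.filter (fun p => sigP E F p = s)).image Prod.snd, (kap b) ^ 2) := by
        push_cast
        ring

lemma sum_mul_swap {α : Type*} [Fintype α] [DecidableEq α]
    (S : Finset (Finset (Fin n))) (Bs : Finset (Fin n) → Finset α)
    (f : Finset (Fin n) → ℝ) (g : α → ℝ) :
    ∑ s ∈ S, f s * (∑ b ∈ Bs s, g b)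
      = ∑ b : α, (∑ s ∈ S.filter (fun s => b ∈ Bs s), f s) * g b := by
  classical
  calc ∑ s ∈ S, f s * (∑ b ∈ Bs s, g b)
      = ∑ s ∈ S, ∑ b : α, (if b ∈ Bs s then f s * g b else 0) := by
        apply Finset.sum_congr rfl; intro s _
        rw [Finset.mul_sum]
        rw [Finset.sum_ite_mem, Finset.univ_inter]
    _ = ∑ b : α, ∑ s ∈ S, (if b ∈ Bs s then f s * g b else 0) := Finset.sum_comm
    _ = ∑ b : α, (∑ s ∈ S.filter (fun s => b ∈ Bs s), f s) * g b := by
        apply Finset.sum_congr rfl; intro b _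
        rw [Finset.sum_filter, Finset.sum_mul]
        apply Finset.sum_congr rfl; intro s _
        by_cases h : b ∈ Bs s <;> simp [h]

lemma sum_kap_touch {l2 : ℝ}
    (hl : ∀ j : Fin n, ∑ b ∈ Finset.univ.filter (fun b => j ∈ psupp (F b)), (kap b) ^ 2 ≤ l2)
    (B : Finset (Fin m')) (s : Finset (Fin n))
    (h : ∀ b ∈ B, ∃ j ∈ s, j ∈ psupp (F b)) :
    ∑ b ∈ B, (kap b) ^ 2 ≤ s.card * l2 := by
  classical
  have h1 : ∀ b ∈ B, (kap b) ^ 2 ≤ ∑ j ∈ s, (if j ∈ psupp (F b) then (kap b) ^ 2 else 0) := by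
    intro b hb
    obtain ⟨j0, hj0s, hj0⟩ := h b hb
    have := Finset.single_le_sum (f := fun j => if j ∈ psupp (F b) then (kap b) ^ 2 else 0)
      (fun j _ => by
        split_ifs
        · exact sq_nonneg _
        · exact le_refl 0) hj0s
    rw [if_pos hj0] at this
    exact this
  calc ∑ b ∈ B, (kap b) ^ 2
      ≤ ∑ b ∈ B, ∑ j ∈ s, (if j ∈ psupp (F b) then (kap b) ^ 2 else 0) :=
        Finset.sum_le_sum h1
    _ = ∑ j ∈ s, ∑ b ∈ B, (if j ∈ psupp (F b) then (kap b) ^ 2 else 0) := Finset.sum_comm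
    _ = ∑ j ∈ s, ∑ b ∈ B.filter (fun b => j ∈ psupp (F b)), (kap b) ^ 2 := by
        apply Finset.sum_congr rfl; intro j _
        rw [Finset.sum_filter]
    _ ≤ ∑ j ∈ s, l2 := by
        apply Finset.sum_le_sum
        intro j _
        refine le_trans ?_ (hl j)
        apply Finset.sum_le_sum_of_subset_of_nonneg
        · intro b hb
          rw [Finset.mem_filter] at hb ⊢
          exact ⟨Finset.mem_univ _, hb.2⟩
        · intro b _ _; exact sq_nonneg _
    _ = s.card * l2 := by rw [Finset.sum_const, nsmul_eq_mul]

lemma core_frob (hF : Function.Injective F)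
    {k k' : ℕ} (hEk : KLocal E k) (hFk : KLocal F k')
    (P : Finset (Fin m × Fin m'))
    (hPac : ∀ p ∈ P, ∃ j, E p.1 j ≠ 0 ∧ F p.2 j ≠ 0 ∧ E p.1 j ≠ F p.2 j)
    {L2 : ℝ}
    (hL : ∀ j : Fin n, ∑ a ∈ Finset.univ.filter (fun a => j ∈ psupp (E a)), (lam a) ^ 2 ≤ L2)
    (hL2 : 0 ≤ L2) :
    ∑ s ∈ P.image (sigP E F), Msig lam E s *
        (∑ b ∈ (P.filter (fun p => sigP E F p = s)).image Prod.snd, (kap b) ^ 2)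
      ≤ (k' : ℝ) * (2 ^ k * L2) * ∑ b : Fin m', (kap b) ^ 2 := by
  classical
  rw [sum_mul_swap]
  have hbd : ∀ b : Fin m',
      (∑ s ∈ (P.image (sigP E F)).filter
          (fun s => b ∈ (P.filter (fun p => sigP E F p = s)).image Prod.snd),
        Msig lam E s) ≤ (k' : ℝ) * (2 ^ k * L2) := by
    intro b
    have htouch : ∀ s ∈ (P.image (sigP E F)).filter
        (fun s => b ∈ (P.filter (fun p => sigP E F p = s)).image Prod.snd),
        ∃ j ∈ psupp (F b), j ∈ s := by
      intro s hs
      rw [Finset.mem_filter] at hs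
      obtain ⟨p, hp, hpb⟩ := Finset.mem_image.mp hs.2
      rw [Finset.mem_filter] at hp
      obtain ⟨j, hj1, hj2⟩ := anchor_site E F (hPac p hp.1)
      refine ⟨j, ?_, ?_⟩
      · rw [← hpb]; exact hj2
      · rw [← hp.2]; exact hj1
    calc (∑ s ∈ (P.image (sigP E F)).filter
          (fun s => b ∈ (P.filter (fun p => sigP E F p = s)).image Prod.snd),
        Msig lam E s)
        ≤ (psupp (F b)).card * (2 ^ k * L2) :=
          sum_Msig_touch lam E hEk hL hL2 _ _ htouch
      _ ≤ (k' : ℝ) * (2 ^ k * L2) := by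
          apply mul_le_mul_of_nonneg_right _ (by positivity)
          exact_mod_cast hFk b
  calc ∑ b : Fin m', (∑ s ∈ (P.image (sigP E F)).filter
          (fun s => b ∈ (P.filter (fun p => sigP E F p = s)).image Prod.snd),
        Msig lam E s) * (kap b) ^ 2
      ≤ ∑ b : Fin m', ((k' : ℝ) * (2 ^ k * L2)) * (kap b) ^ 2 := by
        apply Finset.sum_le_sum
        intro b _
        exact mul_le_mul_of_nonneg_right (hbd b) (sq_nonneg _)
    _ = (k' : ℝ) * (2 ^ k * L2) * ∑ b : Fin m', (kap b) ^ 2 := by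
        rw [Finset.mul_sum]

lemma core_local (hF : Function.Injective F)
    {k k' : ℕ} (hEk : KLocal E k) (hFk : KLocal F k')
    (P : Finset (Fin m × Fin m'))
    (hPac : ∀ p ∈ P, ∃ j, E p.1 j ≠ 0 ∧ F p.2 j ≠ 0 ∧ E p.1 j ≠ F p.2 j)
    (i : Fin n) (hPi : ∀ p ∈ P, i ∈ psupp (prodP E F p))
    {L2 l2 : ℝ}
    (hL : ∀ j : Fin n, ∑ a ∈ Finset.univ.filter (fun a => j ∈ psupp (E a)), (lam a) ^ 2 ≤ L2)
    (hL2 : 0 ≤ L2)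
    (hl : ∀ j : Fin n, ∑ b ∈ Finset.univ.filter (fun b => j ∈ psupp (F b)), (kap b) ^ 2 ≤ l2)
    (hl2 : 0 ≤ l2) :
    ∑ s ∈ P.image (sigP E F), Msig lam E s *
        (∑ b ∈ (P.filter (fun p => sigP E F p = s)).image Prod.snd, (kap b) ^ 2)
      ≤ ((k : ℝ) + k') * (2 ^ k * L2) * l2 := by
  classical
  set S := P.image (sigP E F) with hSdef
  set Bs := fun s => (P.filter (fun p => sigP E F p = s)).image Prod.snd with hBs
  rw [← Finset.sum_filter_add_sum_filter_not S (fun s => i ∈ s)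
    (fun s => Msig lam E s * (∑ b ∈ Bs s, (kap b) ^ 2))]
  have part1 : ∑ s ∈ S.filter (fun s => i ∈ s),
      Msig lam E s * (∑ b ∈ Bs s, (kap b) ^ 2) ≤ (k : ℝ) * l2 * (2 ^ k * L2) := by
    have hK : ∀ s ∈ S.filter (fun s => i ∈ s),
        (∑ b ∈ Bs s, (kap b) ^ 2) ≤ (k : ℝ) * l2 := by
      intro s hs
      rw [Finset.mem_filter, hSdef] at hs
      obtain ⟨p₀, hp₀, hs₀⟩ := Finset.mem_image.mp hs.1
      have hcard : s.card ≤ k := by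
        rw [← hs₀]
        calc (sigP E F p₀).card ≤ (psupp (E p₀.1)).card :=
            Finset.card_le_card (sigP_subset_suppE E F p₀)
          _ ≤ k := hEk p₀.1
      have htouch : ∀ b ∈ Bs s, ∃ j ∈ s, j ∈ psupp (F b) := by
        intro b hb
        rw [hBs] at hb
        obtain ⟨p, hp, hpb⟩ := Finset.mem_image.mp hb
        rw [Finset.mem_filter] at hp
        obtain ⟨j, hj1, hj2⟩ := anchor_site E F (hPac p hp.1)
        refine ⟨j, ?_, ?_⟩
        · rw [← hp.2]; exact hj1
        · rw [← hpb]; exact hj2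
      calc (∑ b ∈ Bs s, (kap b) ^ 2) ≤ s.card * l2 := sum_kap_touch kap F hl _ _ htouch
        _ ≤ (k : ℝ) * l2 := by
            apply mul_le_mul_of_nonneg_right _ hl2
            exact_mod_cast hcard
    calc ∑ s ∈ S.filter (fun s => i ∈ s), Msig lam E s * (∑ b ∈ Bs s, (kap b) ^ 2)
        ≤ ∑ s ∈ S.filter (fun s => i ∈ s), Msig lam E s * ((k : ℝ) * l2) := by
          apply Finset.sum_le_sum
          intro s hs
          exact mul_le_mul_of_nonneg_left (hK s hs) (Msig_nonneg lam E s)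
      _ = (∑ s ∈ S.filter (fun s => i ∈ s), Msig lam E s) * ((k : ℝ) * l2) := by
          rw [Finset.sum_mul]
      _ ≤ (2 ^ k * L2) * ((k : ℝ) * l2) := by
          apply mul_le_mul_of_nonneg_right _ (by positivity)
          apply sum_Msig_mem lam E hEk hL
          intro s hs
          exact (Finset.mem_filter.mp hs).2
      _ = (k : ℝ) * l2 * (2 ^ k * L2) := by ring
  have part2 : ∑ s ∈ S.filter (fun s => ¬ i ∈ s),
      Msig lam E s * (∑ b ∈ Bs s, (kap b) ^ 2) ≤ (k' : ℝ) * (2 ^ k * L2) * l2 := by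
    rw [sum_mul_swap]
    have hbd : ∀ b : Fin m',
        (∑ s ∈ (S.filter (fun s => ¬ i ∈ s)).filter (fun s => b ∈ Bs s), Msig lam E s)
          * (kap b) ^ 2
        ≤ (if i ∈ psupp (F b) then ((k' : ℝ) * (2 ^ k * L2)) * (kap b) ^ 2 else 0) := by
      intro b
      by_cases hib : i ∈ psupp (F b)
      · rw [if_pos hib]
        apply mul_le_mul_of_nonneg_right _ (sq_nonneg _)
        have htouch : ∀ s ∈ (S.filter (fun s => ¬ i ∈ s)).filter (fun s => b ∈ Bs s),
            ∃ j ∈ psupp (F b), j ∈ s := by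
          intro s hs
          rw [Finset.mem_filter] at hs
          rw [hBs] at hs
          obtain ⟨p, hp, hpb⟩ := Finset.mem_image.mp hs.2
          rw [Finset.mem_filter] at hp
          obtain ⟨j, hj1, hj2⟩ := anchor_site E F (hPac p hp.1)
          refine ⟨j, ?_, ?_⟩
          · rw [← hpb]; exact hj2
          · rw [← hp.2]; exact hj1
        calc (∑ s ∈ (S.filter (fun s => ¬ i ∈ s)).filter (fun s => b ∈ Bs s), Msig lam E s)
            ≤ (psupp (F b)).card * (2 ^ k * L2) :=
              sum_Msig_touch lam E hEk hL hL2 _ _ htouch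
          _ ≤ (k' : ℝ) * (2 ^ k * L2) := by
              apply mul_le_mul_of_nonneg_right _ (by positivity)
              exact_mod_cast hFk b
      · rw [if_neg hib]
        have hempty : (S.filter (fun s => ¬ i ∈ s)).filter (fun s => b ∈ Bs s) = ∅ := by
          apply Finset.filter_eq_empty_iff.mpr
          intro s hs hc
          rw [Finset.mem_filter] at hs
          rw [hBs] at hc
          obtain ⟨p, hp, hpb⟩ := Finset.mem_image.mp hc
          rw [Finset.mem_filter] at hp
          -- i is in the support of prodP p but not in s = sigP p, so i ∈ psupp (F b)
          have hiF : i ∈ psupp (F p.2) := by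
            by_contra hiF
            have := loc_in_class E F (hPi p hp.1) hiF
            rw [hp.2] at this
            exact hs.2 this
          rw [hpb] at hiF
          exact hib hiF
        rw [hempty, Finset.sum_empty, zero_mul]
    calc ∑ b : Fin m',
        (∑ s ∈ (S.filter (fun s => ¬ i ∈ s)).filter (fun s => b ∈ Bs s), Msig lam E s)
          * (kap b) ^ 2
        ≤ ∑ b : Fin m', (if i ∈ psupp (F b) then ((k' : ℝ) * (2 ^ k * L2)) * (kap b) ^ 2 else 0) :=
          Finset.sum_le_sum (fun b _ => hbd b)
      _ = ((k' : ℝ) * (2 ^ k * L2)) *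
            ∑ b ∈ Finset.univ.filter (fun b => i ∈ psupp (F b)), (kap b) ^ 2 := by
          rw [← Finset.sum_filter, Finset.mul_sum]
      _ ≤ ((k' : ℝ) * (2 ^ k * L2)) * l2 := by
          apply mul_le_mul_of_nonneg_left (hl i) (by positivity)
      _ = (k' : ℝ) * (2 ^ k * L2) * l2 := by ring
  calc ∑ s ∈ S.filter (fun s => i ∈ s), Msig lam E s * (∑ b ∈ Bs s, (kap b) ^ 2)
        + ∑ s ∈ S.filter (fun s => ¬ i ∈ s), Msig lam E s * (∑ b ∈ Bs s, (kap b) ^ 2)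
      ≤ (k : ℝ) * l2 * (2 ^ k * L2) + (k' : ℝ) * (2 ^ k * L2) * l2 :=
        add_le_add part1 part2
    _ = ((k : ℝ) + k') * (2 ^ k * L2) * l2 := by ring

end Core

section Assembly
open Finset

/-- numeric estimate -/
lemma numeric_nat (k k' : ℕ) (hk : 1 ≤ k) :
    (k + k' + 1) ^ k * (4 ^ k * (k' + 1) ^ k) * ((k' + k) * 2 ^ k)
      ≤ (4 * (k' + k)) ^ (6 * k) := by
  set t := k' + k with ht
  have ht1 : 1 ≤ t := by omega
  have h1 : k + k' + 1 ≤ 4 * t := by omega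
  have h2 : k' + 1 ≤ 4 * t := by omega
  have h3 : (4 : ℕ) ≤ 4 * t := by omega
  have h4 : (2 : ℕ) ≤ 4 * t := by omega
  have h5 : t ≤ 4 * t := by omega
  calc (k + k' + 1) ^ k * (4 ^ k * (k' + 1) ^ k) * (t * 2 ^ k)
      ≤ (4*t) ^ k * ((4*t) ^ k * (4*t) ^ k) * ((4*t) * (4*t) ^ k) := by
        gcongr <;> omega
    _ = (4*t) ^ (4*k + 1) := by ring
    _ ≤ (4*t) ^ (6*k) := Nat.pow_le_pow_right (by omega) (by omega)

lemma zero_norm_bounds {n : ℕ} (H G : QMat n) (hHG : cm H G = 0) (R : ℝ) (hR : 0 ≤ R) :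
    frobNorm (cm H G) ≤ R * frobNorm G ∧ ltnorm (cm H G) ≤ R * ltnorm G := by
  constructor
  · rw [hHG]
    have h0 : frobNorm (0 : QMat n) = 0 := by
      rw [frobNorm]
      have : ∀ x : Fin n → Fin 2, ∑ y : Fin n → Fin 2,
          ‖(0 : QMat n) x y‖ ^ 2 = 0 := by
        intro x; apply Finset.sum_eq_zero; intro y _
        simp
      rw [Finset.sum_congr rfl (fun x _ => this x)]
      simp
    rw [h0]
    exact mul_nonneg hR (frobNorm_nonneg G)
  · rw [hHG]
    have h0 : ltnorm (0 : QMat n) ≤ 0 := by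
      apply ltnorm_le le_rfl
      intro i
      have : ∀ p : Fin n → Fin 4, (if i ∈ psupp p then
          ‖pauliCoeff (0 : QMat n) p‖ ^ 2 else 0) = 0 := by
        intro p
        have : pauliCoeff (0 : QMat n) p = 0 := by
          rw [pauliCoeff]
          rw [Matrix.zero_mul, Matrix.trace_zero]
          simp
        rw [this]
        simp
      rw [Finset.sum_congr rfl (fun p _ => this p)]
      simp
    calc ltnorm (0 : QMat n) ≤ 0 := h0
      _ ≤ R * ltnorm G := mul_nonneg hR (ltnorm_nonneg G)

end Assembly

end AuxPauli

/-- Lemma 3.5: L²-local-norm commutator bound. -/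
theorem l2_local_norm_commutator_bound :
    ∃ C : ℝ, 0 < C ∧
      ∀ (n m m' k k' : ℕ) (lam : Fin m → ℝ) (kap : Fin m' → ℝ)
        (E : Fin m → Fin n → Fin 4) (F : Fin m' → Fin n → Fin 4) (H G : QMat n),
        IsHamiltonian lam E H → KLocal E k →
        IsHamiltonian kap F G → KLocal F k' →
        frobNorm (cm H G) ≤ C * ((4 * (k' + k) : ℕ) : ℝ) ^ (3 * k) * ltnorm H * frobNorm G ∧
        ltnorm (cm H G) ≤ C * ((4 * (k' + k) : ℕ) : ℝ) ^ (3 * k) * ltnorm H * ltnorm G := by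
  classical
  refine ⟨2, by norm_num, ?_⟩
  intro n m m' k k' lam kap E F H G hH hEk hG hFk
  obtain ⟨hEinj, hEnz, hHdef⟩ := hH
  obtain ⟨hFinj, hFnz, hGdef⟩ := hG
  set R : ℝ := 2 * ((4 * (k' + k) : ℕ) : ℝ) ^ (3 * k) with hRdef
  have hRnn : (0:ℝ) ≤ R := by positivity
  show frobNorm (cm H G) ≤ R * ltnorm H * frobNorm G ∧
       ltnorm (cm H G) ≤ R * ltnorm H * ltnorm G
  by_cases hm : m = 0
  · subst hm
    have hH0 : H = 0 := by rw [hHdef]; simp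
    have hcm : cm H G = 0 := by rw [hH0, cm]; simp
    have h1 := zero_norm_bounds H G hcm (R * ltnorm H)
      (mul_nonneg hRnn (ltnorm_nonneg H))
    exact h1
  by_cases hm' : m' = 0
  · subst hm'
    have hG0 : G = 0 := by rw [hGdef]; simp
    have hcm : cm H G = 0 := by rw [hG0, cm]; simp
    exact zero_norm_bounds H G hcm (R * ltnorm H)
      (mul_nonneg hRnn (ltnorm_nonneg H))
  -- main case
  have hk1 : 1 ≤ k := by
    by_contra hc
    push_neg at hc
    have hk0 : k = 0 := by omega
    set a0 : Fin m := ⟨0, Nat.pos_of_ne_zero hm⟩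
    have h1 := hEk a0
    rw [hk0] at h1
    have h2 : psupp (E a0) = ∅ := Finset.card_eq_zero.mp (Nat.le_zero.mp h1)
    apply hEnz a0
    funext j
    by_contra hj
    have : j ∈ psupp (E a0) := mem_psupp_iff.mpr hj
    rw [h2] at this
    exact absurd this (Finset.notMem_empty j)
  -- setup
  set AC : Fin m × Fin m' → Prop :=
    fun p => ∃ j, E p.1 j ≠ 0 ∧ F p.2 j ≠ 0 ∧ E p.1 j ≠ F p.2 j with hACdef
  set P : Finset (Fin m × Fin m') := Finset.univ.filter AC with hPdef
  set θ : Fin m × Fin m' → ℂ :=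
    fun p => pphase (E p.1) (F p.2) - pphase (F p.2) (E p.1) with hθdef
  set cf : (Fin n → Fin 4) → ℂ := fun q =>
    ∑ p ∈ Finset.univ.filter (fun p => prodP E F p = q),
      ((lam p.1 : ℂ) * (kap p.2 : ℂ) * θ p) with hcfdef
  set ALLQ : Finset (Fin n → Fin 4) :=
    (Finset.univ : Finset (Fin m × Fin m')).image (prodP E F) with hALLQdef
  have hPac : ∀ p ∈ P, ∃ j, E p.1 j ≠ 0 ∧ F p.2 j ≠ 0 ∧ E p.1 j ≠ F p.2 j := by
    intro p hp
    exact (Finset.mem_filter.mp hp).2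
  -- expansion of the commutator
  have hcm_exp : cm H G = ∑ q ∈ ALLQ, cf q • PauliOp q := by
    have h1 : H * G = ∑ p : Fin m × Fin m',
        ((lam p.1 : ℂ) * (kap p.2 : ℂ) * pphase (E p.1) (F p.2)) • PauliOp (prodP E F p) := by
      rw [hHdef, hGdef, Matrix.sum_mul, Fintype.sum_prod_type]
      apply Finset.sum_congr rfl; intro a _
      rw [Matrix.mul_sum]
      apply Finset.sum_congr rfl; intro b _
      rw [Matrix.smul_mul, Matrix.mul_smul, PauliOp_mul]
      rw [smul_smul, smul_smul]
      rfl
    have h2 : G * H = ∑ p : Fin m × Fin m',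
        ((lam p.1 : ℂ) * (kap p.2 : ℂ) * pphase (F p.2) (E p.1)) • PauliOp (prodP E F p) := by
      rw [hHdef, hGdef, Matrix.mul_sum, Fintype.sum_prod_type]
      apply Finset.sum_congr rfl; intro a _
      rw [Matrix.sum_mul]
      apply Finset.sum_congr rfl; intro b _
      have hswap : pprod (F b) (E a) = prodP E F (a, b) := by
        funext j
        exact pmul_comm _ _
      rw [Matrix.smul_mul, Matrix.mul_smul, PauliOp_mul, hswap]
      rw [smul_smul, smul_smul]
      have hmc : ((kap b : ℂ) * (lam a : ℂ) * pphase (F b) (E a))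
          = ((lam a : ℂ) * (kap b : ℂ) * pphase (F b) (E a)) := by ring
      rw [hmc]
    rw [cm, h1, h2, ← Finset.sum_sub_distrib]
    have h3 : ∀ p : Fin m × Fin m',
        ((lam p.1 : ℂ) * (kap p.2 : ℂ) * pphase (E p.1) (F p.2)) • PauliOp (prodP E F p)
        - ((lam p.1 : ℂ) * (kap p.2 : ℂ) * pphase (F p.2) (E p.1)) • PauliOp (prodP E F p)
        = ((lam p.1 : ℂ) * (kap p.2 : ℂ) * θ p) • PauliOp (prodP E F p) := by
      intro p
      rw [← sub_smul]
      congr 1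
      rw [hθdef]
      ring
    rw [Finset.sum_congr rfl (fun p _ => h3 p)]
    rw [← Finset.sum_fiberwise_of_maps_to
      (fun p (_ : p ∈ Finset.univ) => Finset.mem_image_of_mem (prodP E F) (Finset.mem_univ p))
      (fun p => ((lam p.1 : ℂ) * (kap p.2 : ℂ) * θ p) • PauliOp (prodP E F p))]
    apply Finset.sum_congr rfl; intro q _
    have h4 : ∀ p ∈ Finset.univ.filter (fun p => prodP E F p = q),
        ((lam p.1 : ℂ) * (kap p.2 : ℂ) * θ p) • PauliOp (prodP E F p)
        = ((lam p.1 : ℂ) * (kap p.2 : ℂ) * θ p) • PauliOp q := by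
      intro p hp
      rw [(Finset.mem_filter.mp hp).2]
    rw [Finset.sum_congr rfl h4, ← Finset.sum_smul]
  -- bound on the coefficients
  have hcf_bound : ∀ q, ‖cf q‖
      ≤ 2 * ∑ p ∈ P.filter (fun p => prodP E F p = q), wgt lam kap p := by
    intro q
    have htheta0 : ∀ p : Fin m × Fin m', ¬ AC p → θ p = 0 := by
      intro p hp
      have hp' : ∀ j, E p.1 j = 0 ∨ F p.2 j = 0 ∨ E p.1 j = F p.2 j := by
        intro j
        by_contra hc
        push_neg at hc
        exact hp ⟨j, hc.1, hc.2.1, hc.2.2⟩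
      show pphase (E p.1) (F p.2) - pphase (F p.2) (E p.1) = 0
      have heq : pphase (E p.1) (F p.2) = pphase (F p.2) (E p.1) := by
        rw [pphase, pphase]
        apply Finset.prod_congr rfl
        intro j _
        congr 1
        exact pph_comm_of _ _ (hp' j)
      rw [heq, sub_self]
    have habs : ∀ p : Fin m × Fin m', ‖θ p‖ ≤ 2 := by
      intro p
      rw [hθdef]
      calc ‖pphase (E p.1) (F p.2) - pphase (F p.2) (E p.1)‖
          ≤ ‖pphase (E p.1) (F p.2)‖ + ‖pphase (F p.2) (E p.1)‖ :=
            norm_sub_le _ _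
        _ = 2 := by rw [abs_pphase, abs_pphase]; norm_num
    have hsplit : cf q = ∑ p ∈ P.filter (fun p => prodP E F p = q),
        ((lam p.1 : ℂ) * (kap p.2 : ℂ) * θ p) := by
      have hcfq : cf q = ∑ p ∈ Finset.univ.filter (fun p => prodP E F p = q),
          ((lam p.1 : ℂ) * (kap p.2 : ℂ) * θ p) := rfl
      rw [hcfq]
      rw [← Finset.sum_filter_add_sum_filter_not
        (Finset.univ.filter (fun p => prodP E F p = q)) AC]
      have hz : ∑ p ∈ (Finset.univ.filter (fun p => prodP E F p = q)).filter
          (fun p => ¬ AC p), ((lam p.1 : ℂ) * (kap p.2 : ℂ) * θ p) = 0 := by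
        apply Finset.sum_eq_zero
        intro p hp
        rw [htheta0 p (Finset.mem_filter.mp hp).2, mul_zero]
      rw [hz, add_zero]
      apply Finset.sum_congr _ (fun _ _ => rfl)
      rw [hPdef]
      ext p
      simp only [Finset.mem_filter, Finset.mem_univ, true_and]
      tauto
    rw [hsplit]
    calc ‖∑ p ∈ P.filter (fun p => prodP E F p = q),
          ((lam p.1 : ℂ) * (kap p.2 : ℂ) * θ p)‖
        ≤ ∑ p ∈ P.filter (fun p => prodP E F p = q),
            ‖(lam p.1 : ℂ) * (kap p.2 : ℂ) * θ p‖ :=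
          norm_sum_le _ _
      _ ≤ ∑ p ∈ P.filter (fun p => prodP E F p = q), 2 * wgt lam kap p := by
          apply Finset.sum_le_sum
          intro p _
          rw [norm_mul, norm_mul, Complex.norm_real, Complex.norm_real, Real.norm_eq_abs, Real.norm_eq_abs]
          rw [wgt]
          calc |lam p.1| * |kap p.2| * ‖θ p‖
              ≤ |lam p.1| * |kap p.2| * 2 := by
                apply mul_le_mul_of_nonneg_left (habs p)
                  (mul_nonneg (abs_nonneg _) (abs_nonneg _))
            _ = 2 * (|lam p.1| * |kap p.2|) := by ring
      _ = 2 * ∑ p ∈ P.filter (fun p => prodP E F p = q), wgt lam kap p := by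
          rw [Finset.mul_sum]
  -- local coefficient sums for H and G
  have hHcoeff : ∀ j : Fin n,
      (∑ p : Fin n → Fin 4, if j ∈ psupp p then ‖pauliCoeff H p‖ ^ 2 else 0)
      = ∑ a ∈ Finset.univ.filter (fun a => j ∈ psupp (E a)), (lam a) ^ 2 := by
    intro j
    set cH : (Fin n → Fin 4) → ℂ := fun q =>
      ∑ a ∈ Finset.univ.filter (fun a => E a = q), (lam a : ℂ) with hcH
    have hH_exp : H = ∑ q ∈ Finset.univ.image E, cH q • PauliOp q := by
      rw [hHdef]
      rw [← Finset.sum_fiberwise_of_maps_to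
        (fun a (_ : a ∈ Finset.univ) => Finset.mem_image_of_mem E (Finset.mem_univ a))
        (fun a => (lam a : ℂ) • PauliOp (E a))]
      apply Finset.sum_congr rfl; intro q _
      have h4 : ∀ a ∈ Finset.univ.filter (fun a => E a = q),
          (lam a : ℂ) • PauliOp (E a) = (lam a : ℂ) • PauliOp q := by
        intro a ha
        rw [(Finset.mem_filter.mp ha).2]
      rw [Finset.sum_congr rfl h4, ← Finset.sum_smul]
    rw [hH_exp, coeffsum_expansion]
    have him : (Finset.univ.image E).filter (fun q => j ∈ psupp q)
        = (Finset.univ.filter (fun a => j ∈ psupp (E a))).image E := by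
      ext q
      simp only [Finset.mem_filter, Finset.mem_image, Finset.mem_univ, true_and]
      constructor
      · rintro ⟨⟨a, rfl⟩, h2⟩
        exact ⟨a, h2, rfl⟩
      · rintro ⟨a, ha, rfl⟩
        exact ⟨⟨a, rfl⟩, ha⟩
    rw [him]
    rw [Finset.sum_image (fun a _ a' _ h => hEinj h)]
    apply Finset.sum_congr rfl
    intro a _
    have hval : cH (E a) = (lam a : ℂ) := by
      have hfil : Finset.univ.filter (fun a' => E a' = E a) = {a} := by
        ext a'
        simp only [Finset.mem_filter, Finset.mem_univ, true_and, Finset.mem_singleton]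
        exact ⟨fun h => hEinj h, fun h => by rw [h]⟩
      show (∑ a' ∈ Finset.univ.filter (fun a' => E a' = E a), (lam a' : ℂ)) = (lam a : ℂ)
      rw [hfil, Finset.sum_singleton]
    rw [hval, Complex.norm_real, Real.norm_eq_abs, _root_.sq_abs]
  have hGcoeff : ∀ j : Fin n,
      (∑ p : Fin n → Fin 4, if j ∈ psupp p then ‖pauliCoeff G p‖ ^ 2 else 0)
      = ∑ b ∈ Finset.univ.filter (fun b => j ∈ psupp (F b)), (kap b) ^ 2 := by
    intro j
    set cG : (Fin n → Fin 4) → ℂ := fun q =>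
      ∑ b ∈ Finset.univ.filter (fun b => F b = q), (kap b : ℂ) with hcG
    have hG_exp : G = ∑ q ∈ Finset.univ.image F, cG q • PauliOp q := by
      rw [hGdef]
      rw [← Finset.sum_fiberwise_of_maps_to
        (fun b (_ : b ∈ Finset.univ) => Finset.mem_image_of_mem F (Finset.mem_univ b))
        (fun b => (kap b : ℂ) • PauliOp (F b))]
      apply Finset.sum_congr rfl; intro q _
      have h4 : ∀ b ∈ Finset.univ.filter (fun b => F b = q),
          (kap b : ℂ) • PauliOp (F b) = (kap b : ℂ) • PauliOp q := by
        intro b hb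
        rw [(Finset.mem_filter.mp hb).2]
      rw [Finset.sum_congr rfl h4, ← Finset.sum_smul]
    rw [hG_exp, coeffsum_expansion]
    have him : (Finset.univ.image F).filter (fun q => j ∈ psupp q)
        = (Finset.univ.filter (fun b => j ∈ psupp (F b))).image F := by
      ext q
      simp only [Finset.mem_filter, Finset.mem_image, Finset.mem_univ, true_and]
      constructor
      · rintro ⟨⟨b, rfl⟩, h2⟩
        exact ⟨b, h2, rfl⟩
      · rintro ⟨b, hb, rfl⟩
        exact ⟨⟨b, rfl⟩, hb⟩
    rw [him]
    rw [Finset.sum_image (fun b _ b' _ h => hFinj h)]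
    apply Finset.sum_congr rfl
    intro b _
    have hval : cG (F b) = (kap b : ℂ) := by
      have hfil : Finset.univ.filter (fun b' => F b' = F b) = {b} := by
        ext b'
        simp only [Finset.mem_filter, Finset.mem_univ, true_and, Finset.mem_singleton]
        exact ⟨fun h => hFinj h, fun h => by rw [h]⟩
      show (∑ b' ∈ Finset.univ.filter (fun b' => F b' = F b), (kap b' : ℂ)) = (kap b : ℂ)
      rw [hfil, Finset.sum_singleton]
    rw [hval, Complex.norm_real, Real.norm_eq_abs, _root_.sq_abs]
  set L2 : ℝ := (ltnorm H) ^ 2 with hL2def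
  set l2 : ℝ := (ltnorm G) ^ 2 with hl2def
  have hL2nn : 0 ≤ L2 := sq_nonneg _
  have hl2nn : 0 ≤ l2 := sq_nonneg _
  have hL : ∀ j : Fin n,
      ∑ a ∈ Finset.univ.filter (fun a => j ∈ psupp (E a)), (lam a) ^ 2 ≤ L2 := by
    intro j
    rw [← hHcoeff j]
    have hnn : 0 ≤ ∑ p : Fin n → Fin 4,
        if j ∈ psupp p then ‖pauliCoeff H p‖ ^ 2 else 0 := by
      apply Finset.sum_nonneg
      intro p _
      split_ifs
      · exact sq_nonneg _
      · exact le_refl 0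
    calc (∑ p : Fin n → Fin 4, if j ∈ psupp p then ‖pauliCoeff H p‖ ^ 2 else 0)
        = (Real.sqrt (∑ p : Fin n → Fin 4,
            if j ∈ psupp p then ‖pauliCoeff H p‖ ^ 2 else 0)) ^ 2 :=
          (Real.sq_sqrt hnn).symm
      _ ≤ (ltnorm H) ^ 2 := by
          apply pow_le_pow_left₀ (Real.sqrt_nonneg _) (le_ltnorm H j)
  have hl : ∀ j : Fin n,
      ∑ b ∈ Finset.univ.filter (fun b => j ∈ psupp (F b)), (kap b) ^ 2 ≤ l2 := by
    intro j
    rw [← hGcoeff j]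
    have hnn : 0 ≤ ∑ p : Fin n → Fin 4,
        if j ∈ psupp p then ‖pauliCoeff G p‖ ^ 2 else 0 := by
      apply Finset.sum_nonneg
      intro p _
      split_ifs
      · exact sq_nonneg _
      · exact le_refl 0
    calc (∑ p : Fin n → Fin 4, if j ∈ psupp p then ‖pauliCoeff G p‖ ^ 2 else 0)
        = (Real.sqrt (∑ p : Fin n → Fin 4,
            if j ∈ psupp p then ‖pauliCoeff G p‖ ^ 2 else 0)) ^ 2 :=
          (Real.sq_sqrt hnn).symm
      _ ≤ (ltnorm G) ^ 2 := by
          apply pow_le_pow_left₀ (Real.sqrt_nonneg _) (le_ltnorm G j)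
  -- the key numeric constant
  set Kc : ℕ := (k + k' + 1) ^ k * (4 ^ k * (k' + 1) ^ k) with hKc
  have hnum : (4 : ℝ) * (Kc : ℝ) * (((k' : ℝ) + (k : ℝ)) * 2 ^ k) ≤ R ^ 2 := by
    have h1 := numeric_nat k k' hk1
    have h2 : ((Kc * ((k' + k) * 2 ^ k) : ℕ) : ℝ)
        ≤ (((4 * (k' + k)) ^ (6 * k) : ℕ) : ℝ) := by
      rw [hKc]
      exact_mod_cast h1
    have h3 : R ^ 2 = 4 * (((4 * (k' + k) : ℕ) : ℝ) ^ (3 * k)) ^ 2 := by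
      rw [hRdef]; ring
    have h4 : (((4 * (k' + k) : ℕ) : ℝ) ^ (3 * k)) ^ 2
        = (((4 * (k' + k)) ^ (6 * k) : ℕ) : ℝ) := by
      push_cast
      rw [← pow_mul]
      congr 1
      ring
    rw [h3, h4]
    calc (4 : ℝ) * (Kc : ℝ) * (((k' : ℝ) + (k : ℝ)) * 2 ^ k)
        = 4 * ((Kc * ((k' + k) * 2 ^ k) : ℕ) : ℝ) := by push_cast; ring
      _ ≤ 4 * (((4 * (k' + k)) ^ (6 * k) : ℕ) : ℝ) := by
          apply mul_le_mul_of_nonneg_left h2 (by norm_num)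
  -- Parseval for G
  have hfrobG : frobNorm G = Real.sqrt (2 ^ n * ∑ b : Fin m', (kap b) ^ 2) := by
    set cG : (Fin n → Fin 4) → ℂ := fun q =>
      ∑ b ∈ Finset.univ.filter (fun b => F b = q), (kap b : ℂ) with hcG
    have hG_exp : G = ∑ q ∈ Finset.univ.image F, cG q • PauliOp q := by
      rw [hGdef]
      rw [← Finset.sum_fiberwise_of_maps_to
        (fun b (_ : b ∈ Finset.univ) => Finset.mem_image_of_mem F (Finset.mem_univ b))
        (fun b => (kap b : ℂ) • PauliOp (F b))]
      apply Finset.sum_congr rfl; intro q _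
      have h4 : ∀ b ∈ Finset.univ.filter (fun b => F b = q),
          (kap b : ℂ) • PauliOp (F b) = (kap b : ℂ) • PauliOp q := by
        intro b hb
        rw [(Finset.mem_filter.mp hb).2]
      rw [Finset.sum_congr rfl h4, ← Finset.sum_smul]
    rw [hG_exp, frobNorm_expansion]
    congr 2
    rw [Finset.sum_image (fun b _ b' _ h => hFinj h)]
    apply Finset.sum_congr rfl
    intro b _
    have hval : cG (F b) = (kap b : ℂ) := by
      have hfil : Finset.univ.filter (fun b' => F b' = F b) = {b} := by
        ext b'
        simp only [Finset.mem_filter, Finset.mem_univ, true_and, Finset.mem_singleton]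
        exact ⟨fun h => hFinj h, fun h => by rw [h]⟩
      show (∑ b' ∈ Finset.univ.filter (fun b' => F b' = F b), (kap b' : ℂ)) = (kap b : ℂ)
      rw [hfil, Finset.sum_singleton]
    rw [hval, Complex.norm_real, Real.norm_eq_abs, _root_.sq_abs]
  have hkapnn : (0:ℝ) ≤ ∑ b : Fin m', (kap b) ^ 2 :=
    Finset.sum_nonneg (fun b _ => sq_nonneg _)
  -- frob chain
  have hs1 : ∑ q ∈ ALLQ, ‖cf q‖ ^ 2
      ≤ 4 * ∑ q ∈ P.image (prodP E F),
          (∑ p ∈ P.filter (fun p => prodP E F p = q), wgt lam kap p) ^ 2 := by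
    have hb : ∀ q ∈ ALLQ, ‖cf q‖ ^ 2
        ≤ 4 * (∑ p ∈ P.filter (fun p => prodP E F p = q), wgt lam kap p) ^ 2 := by
      intro q _
      have h2 : ‖cf q‖ ^ 2
          ≤ (2 * ∑ p ∈ P.filter (fun p => prodP E F p = q), wgt lam kap p) ^ 2 :=
        pow_le_pow_left₀ (norm_nonneg _) (hcf_bound q) 2
      calc ‖cf q‖ ^ 2
          ≤ (2 * ∑ p ∈ P.filter (fun p => prodP E F p = q), wgt lam kap p) ^ 2 := h2
        _ = 4 * (∑ p ∈ P.filter (fun p => prodP E F p = q), wgt lam kap p) ^ 2 := by ring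
    calc ∑ q ∈ ALLQ, ‖cf q‖ ^ 2
        ≤ ∑ q ∈ ALLQ,
            4 * (∑ p ∈ P.filter (fun p => prodP E F p = q), wgt lam kap p) ^ 2 :=
          Finset.sum_le_sum hb
      _ = 4 * ∑ q ∈ ALLQ,
            (∑ p ∈ P.filter (fun p => prodP E F p = q), wgt lam kap p) ^ 2 := by
          rw [Finset.mul_sum]
      _ = 4 * ∑ q ∈ P.image (prodP E F),
            (∑ p ∈ P.filter (fun p => prodP E F p = q), wgt lam kap p) ^ 2 := by
          congr 1
          symm
          apply Finset.sum_subset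
          · exact Finset.image_subset_image (Finset.filter_subset _ _)
          · intro q _ hqn
            have hempty : P.filter (fun p => prodP E F p = q) = ∅ := by
              rw [Finset.filter_eq_empty_iff]
              intro p hp hc
              exact hqn (by rw [← hc]; exact Finset.mem_image_of_mem _ hp)
            rw [hempty, Finset.sum_empty]
            norm_num
  have hfrob_chain : ∑ q ∈ ALLQ, ‖cf q‖ ^ 2
      ≤ R ^ 2 * L2 * (∑ b : Fin m', (kap b) ^ 2) := by
    have c1 := core_main lam kap E F hEinj hFinj hEk hFk P
    have c2 := core_frob lam kap E F hFinj hEk hFk P hPac hL hL2nn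
    have hKcnn : (0:ℝ) ≤ (Kc : ℝ) := Nat.cast_nonneg _
    calc ∑ q ∈ ALLQ, ‖cf q‖ ^ 2
        ≤ 4 * ∑ q ∈ P.image (prodP E F),
            (∑ p ∈ P.filter (fun p => prodP E F p = q), wgt lam kap p) ^ 2 := hs1
      _ ≤ 4 * ((Kc : ℝ) *
            ∑ s ∈ P.image (sigP E F), Msig lam E s *
              (∑ b ∈ (P.filter (fun p => sigP E F p = s)).image Prod.snd, (kap b) ^ 2)) := by
          apply mul_le_mul_of_nonneg_left _ (by norm_num)
          rw [hKc]
          exact c1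
      _ ≤ 4 * ((Kc : ℝ) * ((k' : ℝ) * (2 ^ k * L2) * ∑ b : Fin m', (kap b) ^ 2)) := by
          apply mul_le_mul_of_nonneg_left _ (by norm_num)
          exact mul_le_mul_of_nonneg_left c2 hKcnn
      _ = (4 * (Kc : ℝ) * ((k' : ℝ) * 2 ^ k)) * (L2 * ∑ b : Fin m', (kap b) ^ 2) := by
          ring
      _ ≤ R ^ 2 * (L2 * ∑ b : Fin m', (kap b) ^ 2) := by
          apply mul_le_mul_of_nonneg_right _ (mul_nonneg hL2nn hkapnn)
          have h1 : (k' : ℝ) ≤ (k' : ℝ) + (k : ℝ) := by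
            have hknn : (0:ℝ) ≤ (k:ℝ) := Nat.cast_nonneg _
            linarith
          have h2 : (4:ℝ) * (Kc : ℝ) * ((k':ℝ) * 2 ^ k)
              ≤ (4:ℝ) * (Kc : ℝ) * (((k':ℝ) + (k:ℝ)) * 2 ^ k) := by
            apply mul_le_mul_of_nonneg_left _ (by positivity)
            apply mul_le_mul_of_nonneg_right h1 (by positivity)
          exact le_trans h2 hnum
      _ = R ^ 2 * L2 * (∑ b : Fin m', (kap b) ^ 2) := by ring
  have hfrob_final : frobNorm (cm H G) ≤ R * ltnorm H * frobNorm G := by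
    rw [hcm_exp, frobNorm_expansion, hfrobG]
    have hx : (2:ℝ) ^ n * (∑ q ∈ ALLQ, ‖cf q‖ ^ 2)
        ≤ (R * ltnorm H) ^ 2 * (2 ^ n * ∑ b : Fin m', (kap b) ^ 2) := by
      calc (2:ℝ) ^ n * (∑ q ∈ ALLQ, ‖cf q‖ ^ 2)
          ≤ (2:ℝ) ^ n * (R ^ 2 * L2 * (∑ b : Fin m', (kap b) ^ 2)) := by
            apply mul_le_mul_of_nonneg_left hfrob_chain (by positivity)
        _ = (R * ltnorm H) ^ 2 * (2 ^ n * ∑ b : Fin m', (kap b) ^ 2) := by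
            rw [hL2def]; ring
    calc Real.sqrt (2 ^ n * ∑ q ∈ ALLQ, ‖cf q‖ ^ 2)
        ≤ Real.sqrt ((R * ltnorm H) ^ 2 * (2 ^ n * ∑ b : Fin m', (kap b) ^ 2)) :=
          Real.sqrt_le_sqrt hx
      _ = (R * ltnorm H) * Real.sqrt (2 ^ n * ∑ b : Fin m', (kap b) ^ 2) := by
          rw [Real.sqrt_mul (sq_nonneg _), Real.sqrt_sq
            (mul_nonneg hRnn (ltnorm_nonneg H))]
  -- ltnorm chain
  have hlt_final : ltnorm (cm H G) ≤ R * ltnorm H * ltnorm G := by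
    apply ltnorm_le
      (mul_nonneg (mul_nonneg hRnn (ltnorm_nonneg H)) (ltnorm_nonneg G))
    intro i
    set Pi := P.filter (fun p => i ∈ psupp (prodP E F p)) with hPidef
    have hPiP : Pi ⊆ P := Finset.filter_subset _ _
    have hPiac : ∀ p ∈ Pi, ∃ j, E p.1 j ≠ 0 ∧ F p.2 j ≠ 0 ∧ E p.1 j ≠ F p.2 j :=
      fun p hp => hPac p (hPiP hp)
    have hPii : ∀ p ∈ Pi, i ∈ psupp (prodP E F p) :=
      fun p hp => (Finset.mem_filter.mp hp).2
    have hsum : (∑ p : Fin n → Fin 4,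
        if i ∈ psupp p then ‖pauliCoeff (cm H G) p‖ ^ 2 else 0)
        = ∑ q ∈ ALLQ.filter (fun q => i ∈ psupp q), ‖cf q‖ ^ 2 := by
      rw [hcm_exp]
      exact coeffsum_expansion ALLQ cf i
    have hstep : ∑ q ∈ ALLQ.filter (fun q => i ∈ psupp q), ‖cf q‖ ^ 2
        ≤ 4 * ∑ q ∈ Pi.image (prodP E F),
            (∑ p ∈ Pi.filter (fun p => prodP E F p = q), wgt lam kap p) ^ 2 := by
      have hb : ∀ q ∈ ALLQ.filter (fun q => i ∈ psupp q), ‖cf q‖ ^ 2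
          ≤ 4 * (∑ p ∈ Pi.filter (fun p => prodP E F p = q), wgt lam kap p) ^ 2 := by
        intro q hq
        have hfib : P.filter (fun p => prodP E F p = q)
            = Pi.filter (fun p => prodP E F p = q) := by
          ext p
          simp only [hPidef, Finset.mem_filter]
          constructor
          · rintro ⟨h1, h2⟩
            exact ⟨⟨h1, by rw [h2]; exact (Finset.mem_filter.mp hq).2⟩, h2⟩
          · rintro ⟨⟨h1, _⟩, h2⟩
            exact ⟨h1, h2⟩
        have h2 := hcf_bound q
        rw [hfib] at h2
        calc ‖cf q‖ ^ 2
            ≤ (2 * ∑ p ∈ Pi.filter (fun p => prodP E F p = q), wgt lam kap p) ^ 2 :=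
              pow_le_pow_left₀ (norm_nonneg _) h2 2
          _ = 4 * (∑ p ∈ Pi.filter (fun p => prodP E F p = q), wgt lam kap p) ^ 2 := by
              ring
      calc ∑ q ∈ ALLQ.filter (fun q => i ∈ psupp q), ‖cf q‖ ^ 2
          ≤ ∑ q ∈ ALLQ.filter (fun q => i ∈ psupp q),
              4 * (∑ p ∈ Pi.filter (fun p => prodP E F p = q), wgt lam kap p) ^ 2 :=
            Finset.sum_le_sum hb
        _ = 4 * ∑ q ∈ ALLQ.filter (fun q => i ∈ psupp q),
              (∑ p ∈ Pi.filter (fun p => prodP E F p = q), wgt lam kap p) ^ 2 := by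
            rw [Finset.mul_sum]
        _ ≤ 4 * ∑ q ∈ Pi.image (prodP E F),
              (∑ p ∈ Pi.filter (fun p => prodP E F p = q), wgt lam kap p) ^ 2 := by
            apply mul_le_mul_of_nonneg_left _ (by norm_num)
            rw [← Finset.sum_filter_add_sum_filter_not
              (ALLQ.filter (fun q => i ∈ psupp q)) (fun q => q ∈ Pi.image (prodP E F))
              (fun q => (∑ p ∈ Pi.filter (fun p => prodP E F p = q), wgt lam kap p) ^ 2)]
            have hzero : ∑ q ∈ (ALLQ.filter (fun q => i ∈ psupp q)).filter
                (fun q => ¬ q ∈ Pi.image (prodP E F)),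
                (∑ p ∈ Pi.filter (fun p => prodP E F p = q), wgt lam kap p) ^ 2 = 0 := by
              apply Finset.sum_eq_zero
              intro q hq
              have hempty : Pi.filter (fun p => prodP E F p = q) = ∅ := by
                rw [Finset.filter_eq_empty_iff]
                intro p hp hc
                exact (Finset.mem_filter.mp hq).2
                  (by rw [← hc]; exact Finset.mem_image_of_mem _ hp)
              rw [hempty, Finset.sum_empty]
              norm_num
            rw [hzero, add_zero]
            apply Finset.sum_le_sum_of_subset_of_nonneg
            · intro q hq
              exact (Finset.mem_filter.mp hq).2
            · intro q _ _
              exact sq_nonneg _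
    have c1 := core_main lam kap E F hEinj hFinj hEk hFk Pi
    have c2 := core_local lam kap E F hFinj hEk hFk Pi hPiac i hPii hL hL2nn hl hl2nn
    have hKcnn : (0:ℝ) ≤ (Kc : ℝ) := Nat.cast_nonneg _
    have hchain : (∑ p : Fin n → Fin 4,
        if i ∈ psupp p then ‖pauliCoeff (cm H G) p‖ ^ 2 else 0)
        ≤ (R * ltnorm H * ltnorm G) ^ 2 := by
      rw [hsum]
      calc ∑ q ∈ ALLQ.filter (fun q => i ∈ psupp q), ‖cf q‖ ^ 2
          ≤ 4 * ∑ q ∈ Pi.image (prodP E F),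
              (∑ p ∈ Pi.filter (fun p => prodP E F p = q), wgt lam kap p) ^ 2 := hstep
        _ ≤ 4 * ((Kc : ℝ) *
              ∑ s ∈ Pi.image (sigP E F), Msig lam E s *
                (∑ b ∈ (Pi.filter (fun p => sigP E F p = s)).image Prod.snd,
                  (kap b) ^ 2)) := by
            apply mul_le_mul_of_nonneg_left _ (by norm_num)
            rw [hKc]
            exact c1
        _ ≤ 4 * ((Kc : ℝ) * (((k : ℝ) + k') * (2 ^ k * L2) * l2)) := by
            apply mul_le_mul_of_nonneg_left _ (by norm_num)
            exact mul_le_mul_of_nonneg_left c2 hKcnn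
        _ = (4 * (Kc : ℝ) * (((k' : ℝ) + k) * 2 ^ k)) * (L2 * l2) := by ring
        _ ≤ R ^ 2 * (L2 * l2) := by
            apply mul_le_mul_of_nonneg_right _ (mul_nonneg hL2nn hl2nn)
            exact hnum
        _ = (R * ltnorm H * ltnorm G) ^ 2 := by
            rw [hL2def, hl2def]; ring
    calc Real.sqrt (∑ p : Fin n → Fin 4,
        if i ∈ psupp p then ‖pauliCoeff (cm H G) p‖ ^ 2 else 0)
        ≤ Real.sqrt ((R * ltnorm H * ltnorm G) ^ 2) := Real.sqrt_le_sqrt hchain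
      _ = R * ltnorm H * ltnorm G := Real.sqrt_sq
          (mul_nonneg (mul_nonneg hRnn (ltnorm_nonneg H)) (ltnorm_nonneg G))
  exact ⟨hfrob_final, hlt_final⟩
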